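/- arXiv:1604.01470 — 2 statements merged into one kernel-verified Lean document; each statement's English description precedes it below -/
import Mathlib

section
/- Suppose λ(β) > 0. Then for every δ with 1 < δ < 1 + λ(β), the set E_δ = {x ∈ (0,1] : limsup_{n→∞} (−log_β |I_n(x)|)/n = δ} is of the first category (meagre) in [0,1]. -/
open MeasureTheory Filter Set

noncomputable section

/-- The β-transformation on `(0,1]`: `T_β x = βx − ⌈βx⌉ + 1`. -/
def Tbeta (β x : ℝ) : ℝ := β * x - ⌈β * x⌉ + 1

/-- The digits of the β-expansion, 0-indexed: `eps β x n` is the `(n+1)`-st digit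
`ε_{n+1}(x,β) = ⌈β T_β^n x⌉ − 1`. -/
def eps (β x : ℝ) (n : ℕ) : ℤ := ⌈β * (Tbeta β)^[n] x⌉ - 1

/-- The basic interval of order `n` containing `x`:
all `y ∈ (0,1]` whose first `n` digits agree with those of `x`. -/
def In (β x : ℝ) (n : ℕ) : Set ℝ := {y ∈ Ioc (0:ℝ) 1 | ∀ j < n, eps β y j = eps β x j}

/-- The length of a set (Lebesgue measure). -/
def len (s : Set ℝ) : ℝ := (volume s).toReal

/-- `tseq β n = t_n`: the maximal length of the block of zero digits of the
β-expansion of `1` immediately following position `n` (digits `ε*_{n+1},…,ε*_{n+k}`). -/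
def tseq (β : ℝ) (n : ℕ) : ℕ := sSup {k : ℕ | ∀ j < k, eps β 1 (n + j) = 0}

/-- `Gam β n = Γ_n = max_{1 ≤ k ≤ n} t_k`. -/
def Gam (β : ℝ) (n : ℕ) : ℕ := Finset.sup (Finset.Icc 1 n) (tseq β)

/-- `lam β = λ(β) = limsup_n Γ_n / n`. -/
def lam (β : ℝ) : ℝ := Filter.limsup (fun n : ℕ => (Gam β n : ℝ) / n) atTop

/-- `kstar β x n = k_n^*(x)`: the smallest `k ≥ 0` such that
`(ε_{k+1}(x),…,ε_n(x)) = (ε*_1,…,ε*_{n−k})`. -/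
def kstar (β x : ℝ) (n : ℕ) : ℕ := sInf {k : ℕ | ∀ i < n - k, eps β x (k + i) = eps β 1 i}

/-- `tau β x = τ(x) = limsup_n t_{n − k_n^*(x)} / n`. -/
def tau (β x : ℝ) : ℝ :=
  Filter.limsup (fun n : ℕ => (tseq β (n - kstar β x n) : ℝ) / n) atTop

/-- The upper density `\overline{D}(x) = limsup_n (−log_β |I_n(x)|)/n`. -/
def upperD (β x : ℝ) : ℝ :=
  Filter.limsup (fun n : ℕ => -Real.logb β (len (In β x n)) / n) atTop

/-- The lower density `\underline{D}(x) = liminf_n (−log_β |I_n(x)|)/n`. -/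
def lowerD (β x : ℝ) : ℝ :=
  Filter.liminf (fun n : ℕ => -Real.logb β (len (In β x n)) / n) atTop

/-- The basic interval (cylinder) associated to a finite word `w` of digits:
all `x ∈ (0,1]` whose β-expansion starts with `w`. -/
def cyl (β : ℝ) (w : List ℤ) : Set ℝ :=
  {x ∈ Ioc (0:ℝ) 1 | ∀ j < w.length, eps β x j = w.getD j 0}

/-- A finite word is admissible if it occurs as the initial digits of some `x ∈ (0,1]`. -/
def Admissible (β : ℝ) (w : List ℤ) : Prop := (cyl β w).Nonempty

/-- A basic interval is full if its length is `β^{−n}` where `n` is the order. -/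
def IsFull (β : ℝ) (w : List ℤ) : Prop := len (cyl β w) = β ^ (-(w.length : ℤ))

/-- The word `(ε*_1,…,ε*_n)` of the first `n` digits of the β-expansion of `1`. -/
def estarWord (β : ℝ) (n : ℕ) : List ℤ := (List.range n).map (eps β 1)

/-- The interior of a set relative to the subspace `[0,1]`
(for `S ⊆ [0,1]` this is exactly the interior of `S` in the topology of `[0,1]`). -/
def intIn01 (S : Set ℝ) : Set ℝ := Icc 0 1 \ closure (Icc 0 1 \ S)


-- ### Auxiliary lemmas ###

lemma Tbeta_mem (β z : ℝ) : Tbeta β z ∈ Ioc (0:ℝ) 1 := by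
  unfold Tbeta
  constructor
  · have := Int.ceil_lt_add_one (β * z); linarith
  · have := Int.le_ceil (β * z); linarith

lemma iter_mem {β x : ℝ} (hx : x ∈ Ioc (0:ℝ) 1) (n : ℕ) : (Tbeta β)^[n] x ∈ Ioc (0:ℝ) 1 := by
  cases n with
  | zero => simpa using hx
  | succ n => rw [Function.iterate_succ_apply']; exact Tbeta_mem β _

lemma eps_nonneg {β x : ℝ} (hβ : 0 < β) (hx : x ∈ Ioc (0:ℝ) 1) (n : ℕ) : 0 ≤ eps β x n := by
  have h := iter_mem (β := β) hx n
  have : (0:ℝ) < β * (Tbeta β)^[n] x := mul_pos hβ h.1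
  have : (1:ℤ) ≤ ⌈β * (Tbeta β)^[n] x⌉ := by
    exact_mod_cast Int.one_le_ceil_iff.2 (by exact_mod_cast this)
  unfold eps; omega

lemma eps_shift (β y : ℝ) (p j : ℕ) : eps β y (p + j) = eps β ((Tbeta β)^[p] y) j := by
  unfold eps
  rw [add_comm, Function.iterate_add_apply]

/-- The relative length recursion. -/
def sfun (β x : ℝ) : ℕ → ℝ
  | 0 => 1
  | n + 1 => β * min (sfun β x n) ((eps β x n + 1) / β) - eps β x n

lemma sfun_le_one {β x : ℝ} (hβ : 1 < β) (n : ℕ) : sfun β x n ≤ 1 := by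
  cases n with
  | zero => simp [sfun]
  | succ n =>
    have hβ0 : (0:ℝ) < β := by linarith
    have : β * min (sfun β x n) ((eps β x n + 1) / β) ≤ β * ((eps β x n + 1) / β) :=
      mul_le_mul_of_nonneg_left (min_le_right _ _) hβ0.le
    rw [mul_div_cancel₀ _ (ne_of_gt hβ0)] at this
    simp only [sfun]; linarith

theorem struct {β x : ℝ} (hβ : 1 < β) (hx : x ∈ Ioc (0:ℝ) 1) (n : ℕ) :
    ∃ c : ℝ, In β x n = {y : ℝ | β ^ n * y - c ∈ Ioc 0 (sfun β x n)} ∧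
      ∀ y ∈ In β x n, (Tbeta β)^[n] y = β ^ n * y - c := by
  have hβ0 : (0:ℝ) < β := by linarith
  induction n with
  | zero =>
    refine ⟨0, ?_, ?_⟩
    · ext y; simp [In, sfun]
    · intro y _; simp
  | succ n ih =>
    obtain ⟨c, hIn, hT⟩ := ih
    set e : ℤ := eps β x n with he
    have he0 : (0:ℤ) ≤ e := eps_nonneg hβ0 hx n
    refine ⟨β * c + e, ?_, ?_⟩
    · have hmem : ∀ y, y ∈ In β x (n+1) ↔ y ∈ In β x n ∧ eps β y n = e := by
        intro y
        constructor
        · intro hy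
          refine ⟨⟨hy.1, fun j hj => hy.2 j (by omega)⟩, hy.2 n (by omega)⟩
        · intro ⟨hy, hyn⟩
          refine ⟨hy.1, fun j hj => ?_⟩
          rcases Nat.lt_succ_iff_lt_or_eq.1 hj with h | h
          · exact hy.2 j h
          · subst h; exact hyn
      ext y
      rw [hmem]
      constructor
      · rintro ⟨hy, hyn⟩
        have hz : β ^ n * y - c ∈ Ioc 0 (sfun β x n) := by rw [hIn] at hy; exact hy
        set z := β ^ n * y - c with hzdef
        have hTz : (Tbeta β)^[n] y = z := hT y hy
        have hceil : ⌈β * z⌉ = e + 1 := by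
          have : eps β y n = ⌈β * z⌉ - 1 := by rw [eps, hTz]
          omega
        have hbz : (e:ℝ) < β * z ∧ β * z ≤ (e:ℝ) + 1 := by
          have h1 := Int.ceil_le.1 hceil.le
          have h2 : ((e:ℝ)) < β * z := by
            have := Int.lt_ceil.1 (by rw [hceil]; omega : e < ⌈β * z⌉)
            exact this
          exact ⟨h2, by exact_mod_cast h1⟩
        simp only [Set.mem_setOf_eq, sfun, ← he]
        constructor
        · have : β ^ (n+1) * y - (β * c + e) = β * z - e := by rw [hzdef]; ring
          rw [this]; linarith [hbz.1]
        · have heq : β ^ (n+1) * y - (β * c + e) = β * z - e := by rw [hzdef]; ring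
          rw [heq]
          have hmin : β * min (sfun β x n) ((↑e + 1) / β) = min (β * sfun β x n) (↑e + 1) := by
            rw [mul_min_of_nonneg _ _ hβ0.le, mul_div_cancel₀ _ (ne_of_gt hβ0)]
          rw [hmin]
          have h1 : β * z ≤ β * sfun β x n := mul_le_mul_of_nonneg_left hz.2 hβ0.le
          have h2 : β * z ≤ (e:ℝ) + 1 := hbz.2
          have := le_min h1 h2
          linarith
      · intro hy
        simp only [Set.mem_setOf_eq, sfun, ← he] at hy
        have heq : β ^ (n+1) * y - (β * c + e) = β * (β ^ n * y - c) - e := by ring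
        rw [heq] at hy
        set z := β ^ n * y - c with hzdef
        have hmin : β * min (sfun β x n) ((↑e + 1) / β) = min (β * sfun β x n) (↑e + 1) := by
          rw [mul_min_of_nonneg _ _ hβ0.le, mul_div_cancel₀ _ (ne_of_gt hβ0)]
        rw [hmin] at hy
        have hz : z ∈ Ioc (0:ℝ) (sfun β x n) := by
          constructor
          · have : (0:ℝ) ≤ e := by exact_mod_cast he0
            nlinarith [hy.1]
          · have : β * z - e ≤ β * sfun β x n - e := le_trans hy.2 (by
              have := min_le_left (β * sfun β x n) ((e:ℝ) + 1); linarith)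
            have := (mul_le_mul_iff_right₀ hβ0).1 (by linarith : β * z ≤ β * sfun β x n)
            exact this
        have hyIn : y ∈ In β x n := by rw [hIn]; exact hz
        have hTz : (Tbeta β)^[n] y = z := hT y hyIn
        have hceil : ⌈β * z⌉ = e + 1 := by
          have hle : β * z ≤ (e:ℝ) + 1 := by
            have h2 := hy.2
            have := min_le_right (β * sfun β x n) ((e:ℝ) + 1); linarith
          have hgt : (e:ℝ) < β * z := by linarith [hy.1]
          have h1 : ⌈β * z⌉ ≤ e + 1 := Int.ceil_le.2 (by exact_mod_cast hle)
          have h2 : e < ⌈β * z⌉ := Int.lt_ceil.2 hgt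
          omega
        refine ⟨hyIn, ?_⟩
        rw [eps, hTz, hceil]; ring
    · intro y hy
      have hy' : y ∈ In β x n := ⟨hy.1, fun j hj => hy.2 j (by omega)⟩
      have hTz : (Tbeta β)^[n] y = β ^ n * y - c := hT y hy'
      set z := β ^ n * y - c with hzdef
      have hceil : ⌈β * z⌉ = e + 1 := by
        have : eps β y n = e := hy.2 n (by omega)
        rw [eps, hTz] at this
        omega
      rw [Function.iterate_succ_apply', hTz]
      unfold Tbeta
      rw [hceil]
      push_cast
      ring

lemma mem_In_self (hx : x ∈ Ioc (0:ℝ) 1) (n : ℕ) : x ∈ In β x n := ⟨hx, fun _ _ => rfl⟩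

lemma In_subset (β x : ℝ) (n : ℕ) : In β x n ⊆ Ioc 0 1 := fun _ hy => hy.1

lemma In_trans {y : ℝ} (n : ℕ) (hy : y ∈ In β x n) : In β y n = In β x n := by
  ext w
  exact ⟨fun hw => ⟨hw.1, fun j hj => (hw.2 j hj).trans (hy.2 j hj)⟩,
    fun hw => ⟨hw.1, fun j hj => (hw.2 j hj).trans (hy.2 j hj).symm⟩⟩

lemma affine_Ioc {b c s : ℝ} (hb : 0 < b) :
    {y : ℝ | b * y - c ∈ Ioc 0 s} = Ioc (c / b) ((c + s) / b) := by
  ext y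
  simp only [Set.mem_setOf_eq, mem_Ioc, div_lt_iff₀ hb, le_div_iff₀ hb]
  constructor
  · rintro ⟨h1, h2⟩; constructor <;> linarith
  · rintro ⟨h1, h2⟩; constructor <;> linarith

lemma sfun_pos (hβ : 1 < β) (hx : x ∈ Ioc (0:ℝ) 1) (n : ℕ) : 0 < sfun β x n := by
  obtain ⟨c, hIn, _⟩ := struct hβ hx n
  have hx' : x ∈ In β x n := mem_In_self hx n
  rw [hIn] at hx'
  exact lt_of_lt_of_le hx'.1 hx'.2

lemma len_In (hβ : 1 < β) (hx : x ∈ Ioc (0:ℝ) 1) (n : ℕ) :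
    len (In β x n) = sfun β x n / β ^ n := by
  obtain ⟨c, hIn, _⟩ := struct hβ hx n
  have hb : (0:ℝ) < β ^ n := pow_pos (by linarith) n
  rw [hIn, affine_Ioc hb]
  unfold len
  rw [Real.volume_Ioc, ENNReal.toReal_ofReal]
  · ring
  · have hs := (sfun_pos hβ hx n).le
    have heq : (c + sfun β x n) / β ^ n - c / β ^ n = sfun β x n / β ^ n := by ring
    rw [heq]
    positivity

lemma zero_digits (hβ : 1 < β) {z : ℝ} (hz : z ∈ Ioc (0:ℝ) 1) :
    ∀ k : ℕ, β ^ k * z ≤ 1 → ((Tbeta β)^[k] z = β ^ k * z ∧ ∀ j < k, eps β z j = 0) := by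
  intro k
  induction k with
  | zero => intro _; simp
  | succ k ih =>
    intro hk
    have hβ0 : (0:ℝ) < β := by linarith
    have hle : β ^ k * z ≤ 1 := by
      have h1 : β ^ k * z ≤ β ^ (k+1) * z := by
        apply mul_le_mul_of_nonneg_right _ hz.1.le
        exact pow_le_pow_right₀ (by linarith) (by omega)
      linarith
    obtain ⟨ihT, ihd⟩ := ih hle
    have hpos : 0 < β ^ (k+1) * z := mul_pos (pow_pos hβ0 _) hz.1
    have hceil : ⌈β ^ (k+1) * z⌉ = 1 := by
      have h1 : ⌈β ^ (k+1) * z⌉ ≤ 1 := Int.ceil_le.2 (by exact_mod_cast hk)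
      have h2 : 0 < ⌈β ^ (k+1) * z⌉ := Int.ceil_pos.2 hpos
      omega
    constructor
    · rw [Function.iterate_succ_apply', Tbeta, ihT, ← mul_assoc, ← pow_succ', hceil]
      push_cast; ring
    · intro j hj
      rcases Nat.lt_succ_iff_lt_or_eq.1 hj with h | h
      · exact ihd j h
      · subst h
        unfold eps
        rw [ihT, ← mul_assoc, ← pow_succ', hceil]
        ring
lemma zero_digits' (hβ : 1 < β) {z : ℝ} (hz : z ∈ Ioc (0:ℝ) 1) (k : ℕ)
    (hd : ∀ j < k, eps β z j = 0) : (Tbeta β)^[k] z = β ^ k * z ∧ β ^ k * z ≤ 1 := by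
  induction k with
  | zero => simp [hz.2]
  | succ k ih =>
    have hβ0 : (0:ℝ) < β := by linarith
    obtain ⟨ihT, ihle⟩ := ih (fun j hj => hd j (by omega))
    have hek := hd k (by omega)
    have hceil : ⌈β ^ (k+1) * z⌉ = 1 := by
      unfold eps at hek
      rw [ihT, ← mul_assoc, ← pow_succ'] at hek
      omega
    have hle : β ^ (k+1) * z ≤ 1 := by
      have := Int.ceil_le.1 hceil.le
      exact_mod_cast this
    constructor
    · rw [Function.iterate_succ_apply', Tbeta, ihT, ← mul_assoc, ← pow_succ', hceil]
      push_cast; ring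
    · exact hle

lemma tseq_spec (β : ℝ) (m : ℕ) : ∀ j < tseq β m, eps β 1 (m + j) = 0 := by
  set S := {k : ℕ | ∀ j < k, eps β 1 (m + j) = 0} with hS
  by_cases hbdd : BddAbove S
  · have h0 : (0:ℕ) ∈ S := by intro j hj; omega
    have := Nat.sSup_mem ⟨0, h0⟩ hbdd
    exact this
  · intro j hj
    obtain ⟨k, hk, hjk⟩ := (not_bddAbove_iff.1 hbdd) j
    exact hk j hjk

lemma sfun_one (hβ : 1 < β) (m : ℕ) : sfun β 1 m = (Tbeta β)^[m] 1 := by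
  have h1 : (1:ℝ) ∈ Ioc (0:ℝ) 1 := ⟨one_pos, le_refl 1⟩
  obtain ⟨c, hIn, hT⟩ := struct hβ h1 m
  have hmem : (1:ℝ) ∈ In β 1 m := mem_In_self h1 m
  have hT1 : (Tbeta β)^[m] 1 = β ^ m * 1 - c := hT 1 hmem
  have hz : β ^ m * 1 - c ∈ Ioc 0 (sfun β 1 m) := by rw [hIn] at hmem; exact hmem
  have hb : (0:ℝ) < β ^ m := pow_pos (by linarith) m
  set s := sfun β 1 m with hs
  have hys : (s + c) / β ^ m ∈ In β 1 m := by
    rw [hIn]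
    constructor
    · have : β ^ m * ((s + c) / β ^ m) - c = s := by field_simp; ring
      rw [this]; exact lt_of_lt_of_le hz.1 hz.2
    · have : β ^ m * ((s + c) / β ^ m) - c = s := by field_simp; ring
      rw [this]
  have hle1 : (s + c) / β ^ m ≤ 1 := (In_subset β 1 m hys).2
  have : s + c ≤ β ^ m := by
    rw [div_le_one hb] at hle1; exact hle1
  rw [hT1]
  have h2 : β ^ m * 1 - c ≤ s := hz.2
  linarith

lemma Tm1_le (hβ : 1 < β) (m : ℕ) : β ^ (tseq β m) * (Tbeta β)^[m] 1 ≤ 1 := by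
  have h1 : (1:ℝ) ∈ Ioc (0:ℝ) 1 := ⟨one_pos, le_refl 1⟩
  have hz := iter_mem (β := β) h1 m
  apply (zero_digits' hβ hz (tseq β m) ?_).2
  intro j hj
  rw [← eps_shift]
  exact tseq_spec β m j hj

/-- Frequently, `tseq` is large. -/
lemma freq_tseq {β : ℝ} (hlam : 0 < lam β) {γ : ℝ} (hγ0 : 0 < γ) (hγ : γ < lam β) (M : ℕ) :
    ∃ m : ℕ, M ≤ m ∧ γ * m ≤ (tseq β m : ℝ) := by
  have hcob : IsCoboundedUnder (· ≤ ·) atTop (fun n : ℕ => (Gam β n : ℝ) / n) := by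
    apply Filter.IsCoboundedUnder.of_frequently_ge (a := 0)
    exact Filter.Frequently.of_forall (fun n => by positivity)
  have hfreq : ∃ᶠ n in atTop, γ < (Gam β n : ℝ) / n :=
    Filter.frequently_lt_of_lt_limsup hcob hγ
  set B : ℕ := Finset.sup (Finset.Icc 1 M) (tseq β) with hB
  obtain ⟨n, hn, hγn⟩ := (Filter.frequently_atTop.1 hfreq) (M + 1 + ⌈(B : ℝ) / γ⌉₊ + 1)
  have hn1 : 1 ≤ n := by omega
  have hnpos : (0:ℝ) < n := by exact_mod_cast hn1
  have hGn : γ * n < (Gam β n : ℝ) := by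
    rw [lt_div_iff₀ hnpos] at hγn; linarith
  have hBn : (B : ℝ) < γ * n := by
    have h1 : ((⌈(B : ℝ) / γ⌉₊ : ℝ) + 1) ≤ (n : ℝ) := by
      have : ⌈(B : ℝ) / γ⌉₊ + 1 ≤ n := by omega
      exact_mod_cast this
    have h2 : (B : ℝ) / γ ≤ ⌈(B : ℝ) / γ⌉₊ := Nat.le_ceil _
    have h3 : (B : ℝ) / γ < n := by linarith
    rw [div_lt_iff₀ hγ0] at h3; linarith
  obtain ⟨k, hk, hkG⟩ := Finset.exists_mem_eq_sup (Finset.Icc 1 n)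
      ⟨1, Finset.mem_Icc.2 ⟨le_refl 1, hn1⟩⟩ (tseq β)
  obtain ⟨hk1, hkn⟩ := Finset.mem_Icc.1 hk
  have htk : γ * n < (tseq β k : ℝ) := by
    have : (Gam β n : ℝ) = (tseq β k : ℝ) := by rw [Gam, hkG]
    linarith
  have hkM : M < k := by
    by_contra h
    push_neg at h
    have h1 : tseq β k ≤ B := Finset.le_sup (Finset.mem_Icc.2 ⟨hk1, h⟩)
    have h2 : (tseq β k : ℝ) ≤ (B : ℝ) := by exact_mod_cast h1
    linarith
  refine ⟨k, by omega, ?_⟩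
  have hkn' : (k : ℝ) ≤ n := by exact_mod_cast hkn
  have : γ * k ≤ γ * n := mul_le_mul_of_nonneg_left hkn' hγ0.le
  linarith

set_option maxHeartbeats 2000000 in
/-- Density of the open sets in the construction. -/
lemma dense_G {β : ℝ} (hβ : 1 < β) (hlam : 0 < lam β) {cc : ℝ} (hcc1 : 1 < cc)
    (hcc2 : cc - 1 < lam β) (N : ℕ) :
    Dense (interior {x : ℝ | ∃ n : ℕ, N ≤ n ∧ 1 ≤ n ∧
        len (In β x n) ≤ β ^ (-(cc * n))} ∪ (Icc (0:ℝ) 1)ᶜ) := by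
  have hβ0 : (0:ℝ) < β := by linarith
  set O : Set ℝ := {x : ℝ | ∃ n : ℕ, N ≤ n ∧ 1 ≤ n ∧ len (In β x n) ≤ β ^ (-(cc * n))} with hO
  rw [dense_iff_inter_open]
  rintro U hU ⟨x, hxU⟩
  obtain ⟨r, hr0, hball⟩ := Metric.isOpen_iff.1 hU x hxU
  rw [Real.ball_eq_Ioo] at hball
  rcases le_or_gt x 0 with hx0 | hx0
  · refine ⟨x - r/2, hball ⟨by linarith, by linarith⟩, Or.inr ?_⟩
    simp only [mem_compl_iff, mem_Icc, not_and_or, not_le]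
    left; linarith
  rcases le_or_gt 1 x with hx1 | hx1
  · refine ⟨x + r/2, hball ⟨by linarith, by linarith⟩, Or.inr ?_⟩
    simp only [mem_compl_iff, mem_Icc, not_and_or, not_le]
    right; linarith
  -- main case : 0 < x < 1
  set u : ℝ := max 0 (x - r) with hu
  set v : ℝ := min 1 (x + r) with hv
  have huv : Ioo u v ⊆ Ioo (x - r) (x + r) :=
    Ioo_subset_Ioo (le_max_right _ _) (min_le_right _ _)
  have hux : u < x := max_lt hx0 (by linarith)
  have hxv : x < v := lt_min hx1 (by linarith)
  have hu0 : 0 ≤ u := le_max_left _ _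
  have hv1 : v ≤ 1 := min_le_left _ _
  have hx01 : x ∈ Ioc (0:ℝ) 1 := ⟨hx0, hx1.le⟩
  -- step 1 : choose n0
  obtain ⟨n0, hn0⟩ := pow_unbounded_of_one_lt (min (x - u) (v - x))⁻¹ hβ
  have hmin0 : 0 < min (x - u) (v - x) := lt_min (by linarith) (by linarith)
  have hn0' : (β ^ n0)⁻¹ < min (x - u) (v - x) := by
    rw [inv_lt_comm₀ (pow_pos hβ0 n0) hmin0]
    exact hn0
  -- step 2 : the basic interval of x of order n0 sits inside (u,v)
  obtain ⟨c0, hIn0, hT0⟩ := struct hβ hx01 n0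
  set s0 : ℝ := sfun β x n0 with hs0
  have hs0pos : 0 < s0 := sfun_pos hβ hx01 n0
  have hs0le : s0 ≤ 1 := sfun_le_one hβ n0
  have hbn0 : (0:ℝ) < β ^ n0 := pow_pos hβ0 n0
  have hxmem : x ∈ In β x n0 := mem_In_self hx01 n0
  have hxz : β ^ n0 * x - c0 ∈ Ioc 0 s0 := by rw [hIn0] at hxmem; exact hxmem
  have hsub : In β x n0 ⊆ Ioo u v := by
    intro y hy
    rw [hIn0] at hy
    have hy' : β ^ n0 * y - c0 ∈ Ioc 0 s0 := hy
    have h1 : s0 / β ^ n0 ≤ (β ^ n0)⁻¹ := by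
      rw [div_le_iff₀ hbn0]
      calc s0 ≤ 1 := hs0le
      _ = (β ^ n0)⁻¹ * β ^ n0 := by field_simp
    have hxu : x - u > (β ^ n0)⁻¹ → True := fun _ => trivial
    have hminu : (β ^ n0)⁻¹ < x - u := lt_of_lt_of_le hn0' (min_le_left _ _)
    have hminv : (β ^ n0)⁻¹ < v - x := lt_of_lt_of_le hn0' (min_le_right _ _)
    constructor
    · -- u < y
      have h2 : β ^ n0 * x - c0 ≤ s0 := hxz.2
      have h3 : 0 < β ^ n0 * y - c0 := hy'.1
      -- y > (c0) / β^n0 ≥ (β^n0 x - s0)/β^n0 = x - s0/β^n0 ≥ x - β^{-n0} > u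
      have h4 : β ^ n0 * y > β ^ n0 * x - s0 := by linarith
      have h5 : β ^ n0 * y > β ^ n0 * x - β ^ n0 * (β ^ n0)⁻¹ := by
        have : s0 ≤ β ^ n0 * (β ^ n0)⁻¹ := by
          rw [mul_inv_cancel₀ (ne_of_gt hbn0)]; exact hs0le
        linarith
      have h6 : β ^ n0 * y > β ^ n0 * (x - (β ^ n0)⁻¹) := by rw [mul_sub]; linarith
      have h7 : y > x - (β ^ n0)⁻¹ := (mul_lt_mul_iff_right₀ hbn0).1 h6
      linarith
    · -- y < v
      have h2 : 0 < β ^ n0 * x - c0 := hxz.1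
      have h3 : β ^ n0 * y - c0 ≤ s0 := hy'.2
      have h5 : β ^ n0 * y < β ^ n0 * x + s0 := by linarith
      have h6 : β ^ n0 * y < β ^ n0 * (x + (β ^ n0)⁻¹) := by
        rw [mul_add]
        have : s0 ≤ β ^ n0 * (β ^ n0)⁻¹ := by
          rw [mul_inv_cancel₀ (ne_of_gt hbn0)]; exact hs0le
        linarith
      have h7 : y < x + (β ^ n0)⁻¹ := (mul_lt_mul_iff_right₀ hbn0).1 h6
      linarith
  -- step 3 : full subinterval, order p = n0 + k0
  obtain ⟨k0, hk0⟩ := pow_unbounded_of_one_lt s0⁻¹ hβ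
  have hk0' : (β ^ k0)⁻¹ < s0 := by
    rw [inv_lt_comm₀ (pow_pos hβ0 k0) hs0pos]
    exact hk0
  set p : ℕ := n0 + k0 with hp
  have hbp : (0:ℝ) < β ^ p := pow_pos hβ0 p
  have hbk0 : (0:ℝ) < β ^ k0 := pow_pos hβ0 k0
  have hpow : (β:ℝ) ^ p = β ^ k0 * β ^ n0 := by rw [hp, pow_add]; ring
  -- step 4 : choose m
  set γ' : ℝ := (cc - 1 + lam β) / 2 with hγ'
  have hγ'0 : 0 < γ' := by rw [hγ']; linarith
  have hγ'lam : γ' < lam β := by rw [hγ']; linarith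
  have hγ'cc : cc - 1 < γ' := by rw [hγ']; linarith
  obtain ⟨m, hmM, hmt⟩ := freq_tseq hlam hγ'0 hγ'lam (N + 1 + ⌈(cc * p) / (γ' - (cc - 1))⌉₊)
  have hmN : N ≤ p + m := by omega
  have hm1 : 1 ≤ p + m := by omega
  have hmbig : cc * p ≤ (γ' - (cc - 1)) * m := by
    have h1 : (cc * p) / (γ' - (cc - 1)) ≤ (⌈(cc * p) / (γ' - (cc - 1))⌉₊ : ℝ) := Nat.le_ceil _
    have h2 : (⌈(cc * p) / (γ' - (cc - 1))⌉₊ : ℝ) ≤ m := by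
      have : ⌈(cc * p) / (γ' - (cc - 1))⌉₊ ≤ m := by omega
      exact_mod_cast this
    have h3 : (cc * p) / (γ' - (cc - 1)) ≤ m := by linarith
    rw [div_le_iff₀ (by linarith : (0:ℝ) < γ' - (cc - 1))] at h3
    linarith
  -- key inequality : (cc - 1) * (p + m) ≤ tseq β m
  have hkey : (cc - 1) * ((p:ℝ) + m) ≤ (tseq β m : ℝ) := by
    have h2 : (cc - 1) * (p:ℝ) ≤ cc * p := by
      have hp0 : (0:ℝ) ≤ p := by positivity
      nlinarith
    have h4 : (cc - 1) * ((p:ℝ) + m) = (cc - 1) * p + (cc - 1) * m := by ring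
    have h5 : γ' * m = (cc - 1) * (m:ℝ) + (γ' - (cc - 1)) * m := by ring
    linarith [hmt]
  -- step 5 : the target cylinder
  have h11 : (1:ℝ) ∈ Ioc (0:ℝ) 1 := ⟨one_pos, le_refl 1⟩
  obtain ⟨c1, hIn1, hT1⟩ := struct hβ h11 m
  set s1 : ℝ := sfun β 1 m with hs1
  have hs1pos : 0 < s1 := sfun_pos hβ h11 m
  have hbm : (0:ℝ) < β ^ m := pow_pos hβ0 m
  set A : ℝ := β ^ k0 * c0 with hA
  set C : Set ℝ := {y : ℝ | β ^ p * y - A ∈ In β 1 m} with hC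
  -- membership chain for y ∈ C
  have hchain : ∀ y : ℝ, β ^ p * y - A ∈ Ioc (0:ℝ) 1 →
      (β ^ n0 * y - c0 ∈ Ioc 0 (β ^ k0)⁻¹) ∧ y ∈ In β x n0 ∧
      (Tbeta β)^[p] y = β ^ p * y - A ∧ (∀ j < k0, eps β y (n0 + j) = 0) := by
    intro y hw01
    have heq : β ^ p * y - A = β ^ k0 * (β ^ n0 * y - c0) := by
      rw [hpow, hA]; ring
    have hz1 : β ^ n0 * y - c0 ∈ Ioc 0 (β ^ k0)⁻¹ := by
      constructor
      · have h0 := hw01.1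
        rw [heq] at h0
        have heq2 : β ^ n0 * y - c0 = (β ^ k0)⁻¹ * (β ^ k0 * (β ^ n0 * y - c0)) := by
          field_simp
        rw [heq2]
        exact mul_pos (inv_pos.2 hbk0) h0
      · have h := hw01.2; rw [heq] at h
        rw [← le_div_iff₀' hbk0] at h
        simpa [one_div] using h
    have hyIn : y ∈ In β x n0 := by
      rw [hIn0]
      exact ⟨hz1.1, le_trans hz1.2 hk0'.le⟩
    have hy01 : y ∈ Ioc (0:ℝ) 1 := In_subset β x n0 hyIn
    have hTn0 : (Tbeta β)^[n0] y = β ^ n0 * y - c0 := hT0 y hyIn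
    set z : ℝ := β ^ n0 * y - c0 with hz
    have hz01 : z ∈ Ioc (0:ℝ) 1 := ⟨hz1.1, le_trans hz1.2 (by
      rw [inv_le_one_iff₀]; right; exact one_le_pow₀ hβ.le)⟩
    have hzk : β ^ k0 * z ≤ 1 := by
      rw [← heq]; exact hw01.2
    have hTk := zero_digits hβ hz01 k0 hzk
    have hTp : (Tbeta β)^[p] y = β ^ p * y - A := by
      have h1 : (Tbeta β)^[p] y = (Tbeta β)^[k0] ((Tbeta β)^[n0] y) := by
        rw [hp, add_comm]
        exact Function.iterate_add_apply _ _ _ _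
      rw [h1, hTn0, hTk.1, ← heq]
    have hd0 : ∀ j < k0, eps β y (n0 + j) = 0 := by
      intro j hj
      rw [eps_shift, hTn0]
      exact hTk.2 j hj
    exact ⟨hz1, hyIn, hTp, hd0⟩
  -- all points of C1 share the same first p digits
  set C1 : Set ℝ := {y : ℝ | β ^ p * y - A ∈ Ioc (0:ℝ) 1} with hC1
  have hC1p : ∀ y ∈ C1, ∀ w ∈ C1, w ∈ In β y p := by
    intro y hy w hw
    obtain ⟨-, hyIn, -, hyd⟩ := hchain y hy
    obtain ⟨-, hwIn, -, hwd⟩ := hchain w hw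
    refine ⟨In_subset β x n0 hwIn, ?_⟩
    intro j hj
    rcases lt_or_ge j n0 with h | h
    · exact (hwIn.2 j h).trans (hyIn.2 j h).symm
    · obtain ⟨i, rfl⟩ : ∃ i, j = n0 + i := ⟨j - n0, by omega⟩
      have hik0 : i < k0 := by omega
      rw [hwd i hik0, hyd i hik0]
  have hCsubC1 : C ⊆ C1 := fun y hy => In_subset β 1 m hy
  -- the relative length of C1-points after p steps is 1
  have hsfp : ∀ y ∈ C1, sfun β y p = 1 := by
    intro y hy
    obtain ⟨-, hyIn, -, -⟩ := hchain y hy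
    have hy01 : y ∈ Ioc (0:ℝ) 1 := In_subset β x n0 hyIn
    obtain ⟨cy, hIny, -⟩ := struct hβ hy01 p
    have hsy : 0 < sfun β y p := sfun_pos hβ hy01 p
    have hsub1 : C1 ⊆ In β y p := fun w hw => hC1p y hy w hw
    have hvol : volume C1 ≤ volume (In β y p) := measure_mono hsub1
    have hC1eq : C1 = Ioc (A / β ^ p) ((A + 1) / β ^ p) := affine_Ioc hbp
    have hIneq : In β y p = Ioc (cy / β ^ p) ((cy + sfun β y p) / β ^ p) := by
      rw [hIny]; exact affine_Ioc hbp
    rw [hC1eq, hIneq, Real.volume_Ioc, Real.volume_Ioc] at hvol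
    have e1 : (A + 1) / β ^ p - A / β ^ p = 1 / β ^ p := by ring
    have e2 : (cy + sfun β y p) / β ^ p - cy / β ^ p = sfun β y p / β ^ p := by ring
    rw [e1, e2, ENNReal.ofReal_le_ofReal_iff (by positivity)] at hvol
    have h3 : (1:ℝ) ≤ sfun β y p := by
      have := (div_le_div_iff_of_pos_right hbp).1 hvol
      linarith [this]
    exact le_antisymm (sfun_le_one hβ p) h3
  -- digits p . . p+m of points of C agree with the expansion of 1
  have hdC : ∀ y ∈ C, ∀ i < m, eps β y (p + i) = eps β 1 i := by
    intro y hy i him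
    obtain ⟨-, -, hTp, -⟩ := hchain y (hCsubC1 hy)
    rw [eps_shift, hTp]
    exact hy.2 i him
  -- relative lengths propagate
  have hsfC : ∀ y ∈ C, sfun β y (p + m) = sfun β 1 m := by
    intro y hy
    have key : ∀ i, i ≤ m → sfun β y (p + i) = sfun β 1 i := by
      intro i
      induction i with
      | zero => intro _; simpa [sfun] using hsfp y (hCsubC1 hy)
      | succ i ih =>
        intro hi
        have h1 : sfun β y (p + (i + 1)) = sfun β y ((p + i) + 1) := by ring_nf
        rw [h1]
        show β * min (sfun β y (p+i)) ((eps β y (p+i) + 1) / β) - eps β y (p+i) = sfun β 1 (i+1)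
        rw [ih (by omega), hdC y hy i (by omega)]
        rfl
    exact key m (le_refl m)
  -- length estimate for points of C
  have hlenC : ∀ y ∈ C, len (In β y (p + m)) ≤ β ^ (-(cc * ((p + m : ℕ) : ℝ))) := by
    intro y hy
    obtain ⟨-, hyIn, -, -⟩ := hchain y (hCsubC1 hy)
    have hy01 : y ∈ Ioc (0:ℝ) 1 := In_subset β x n0 hyIn
    set t : ℕ := tseq β m with ht
    have hbt : (0:ℝ) < β ^ t := pow_pos hβ0 t
    have hbpm : (0:ℝ) < β ^ (p + m) := pow_pos hβ0 _
    have h1 : len (In β y (p + m)) = sfun β 1 m / β ^ (p + m) := by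
      rw [len_In hβ hy01, hsfC y hy]
    have h2 : sfun β 1 m ≤ (β ^ t)⁻¹ := by
      rw [sfun_one hβ]
      have h3 := Tm1_le hβ m
      rw [← le_div_iff₀' hbt] at h3
      simpa [one_div] using h3
    have h4 : len (In β y (p + m)) ≤ (β ^ t)⁻¹ / β ^ (p + m) := by
      rw [h1]
      gcongr
    have h5 : ((β ^ t)⁻¹ / β ^ (p + m) : ℝ) = β ^ (-(((t + (p + m) : ℕ)) : ℝ)) := by
      rw [Real.rpow_neg hβ0.le, Real.rpow_natCast, pow_add β t (p + m), mul_inv,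
        div_eq_mul_inv]
    have h6 : (β:ℝ) ^ (-(((t + (p + m) : ℕ)) : ℝ)) ≤ β ^ (-(cc * ((p + m : ℕ) : ℝ))) := by
      rw [Real.rpow_le_rpow_left_iff hβ]
      push_cast
      nlinarith [hkey]
    calc len (In β y (p + m)) ≤ (β ^ t)⁻¹ / β ^ (p + m) := h4
      _ = β ^ (-(((t + (p + m) : ℕ)) : ℝ)) := h5
      _ ≤ β ^ (-(cc * ((p + m : ℕ) : ℝ))) := h6
  -- C is a nontrivial interval
  have hInm : In β 1 m = Ioc (c1 / β ^ m) ((c1 + s1) / β ^ m) := by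
    rw [hIn1]; exact affine_Ioc hbm
  set q1 : ℝ := c1 / β ^ m with hq1
  set q2 : ℝ := (c1 + s1) / β ^ m with hq2
  have hq12 : q1 < q2 := by
    rw [hq1, hq2, div_lt_div_iff_of_pos_right hbm]
    linarith
  have hCeq : C = Ioc ((A + q1) / β ^ p) ((A + q1 + (q2 - q1)) / β ^ p) := by
    rw [hC, hInm]
    have : {y : ℝ | β ^ p * y - A ∈ Ioc q1 q2}
        = {y : ℝ | β ^ p * y - (A + q1) ∈ Ioc 0 (q2 - q1)} := by
      ext w
      simp only [Set.mem_setOf_eq, mem_Ioc]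
      constructor <;> (rintro ⟨a1, a2⟩; constructor <;> linarith)
    rw [this]
    exact affine_Ioc hbp
  set a2 : ℝ := (A + q1) / β ^ p with ha2
  set b2 : ℝ := (A + q1 + (q2 - q1)) / β ^ p with hb2
  have ha2b2 : a2 < b2 := by
    rw [ha2, hb2, div_lt_div_iff_of_pos_right hbp]
    linarith
  set pt : ℝ := (a2 + b2) / 2 with hpt
  have hptIoo : pt ∈ Ioo a2 b2 := ⟨by rw [hpt]; linarith, by rw [hpt]; linarith⟩
  have hIooC : Ioo a2 b2 ⊆ C := by rw [hCeq]; exact Ioo_subset_Ioc_self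
  have hIooO : Ioo a2 b2 ⊆ O := by
    intro y hy
    exact ⟨p + m, hmN, hm1, hlenC y (hIooC hy)⟩
  have hptU : pt ∈ U := by
    apply hball
    apply huv
    apply hsub
    exact (hchain pt (hCsubC1 (hIooC hptIoo))).2.1
  refine ⟨pt, hptU, Or.inl ?_⟩
  exact interior_maximal hIooO isOpen_Ioo hptIoo


/-- If `λ(β) > 0`, then for every `δ` with `1 < δ < 1 + λ(β)`, the set
`E_δ = {x ∈ (0,1] : limsup (−log_β |I_n(x)|)/n = δ}` is of the first category (meagre)
in `[0,1]`. -/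
theorem E_delta_meagre (β : ℝ) (hβ : 1 < β) (hlam : 0 < lam β)
    (δ : ℝ) (hδ1 : 1 < δ) (hδ2 : δ < 1 + lam β) :
    IsMeagre {x ∈ Ioc (0:ℝ) 1 | upperD β x = δ} := by
  have hβ0 : (0:ℝ) < β := by linarith
  set cc : ℝ := (δ + 1 + lam β) / 2 with hcc
  have hcc1 : 1 < cc := by rw [hcc]; linarith
  have hccδ : δ < cc := by rw [hcc]; linarith
  have hcc2 : cc - 1 < lam β := by rw [hcc]; linarith
  set O : ℕ → Set ℝ := fun N => {x : ℝ | ∃ n : ℕ, N ≤ n ∧ 1 ≤ n ∧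
      len (In β x n) ≤ β ^ (-(cc * n))} with hO
  set G : ℕ → Set ℝ := fun N => interior (O N) ∪ (Icc (0:ℝ) 1)ᶜ with hG
  have hGres : ∀ N, G N ∈ residual ℝ := fun N =>
    residual_of_dense_open (IsOpen.union isOpen_interior isClosed_Icc.isOpen_compl)
      (dense_G hβ hlam hcc1 hcc2 N)
  have hInter : (⋂ N, G N) ∈ residual ℝ := countable_iInter_mem.2 hGres
  rw [IsMeagre]
  apply Filter.mem_of_superset hInter
  intro x hxG hmem
  have hx01 : x ∈ Ioc (0:ℝ) 1 := hmem.1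
  have hxIcc : x ∈ Icc (0:ℝ) 1 := ⟨hx01.1.le, hx01.2⟩
  have hxO : ∀ N, x ∈ O N := by
    intro N
    have := mem_iInter.1 hxG N
    rcases this with h | h
    · exact interior_subset h
    · exact absurd hxIcc h
  set a : ℕ → ℝ := fun n => -Real.logb β (len (In β x n)) / n with ha
  have hfreq : ∃ᶠ n in atTop, cc ≤ a n := by
    rw [Filter.frequently_atTop]
    intro N
    obtain ⟨n, hnN, hn1, hlen⟩ := hxO N
    refine ⟨n, hnN, ?_⟩
    have hn0 : (0:ℝ) < n := by exact_mod_cast hn1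
    have hlenpos : 0 < len (In β x n) := by
      rw [len_In hβ hx01 n]
      have := sfun_pos hβ hx01 n
      positivity
    have hlogb : Real.logb β (len (In β x n)) ≤ -(cc * n) := by
      have h1 : Real.logb β (len (In β x n)) ≤ Real.logb β (β ^ (-(cc * (n:ℝ)))) :=
        Real.logb_le_logb_of_le hβ hlenpos hlen
      rwa [Real.logb_rpow hβ0 (ne_of_gt hβ)] at h1
    rw [ha]
    simp only
    rw [le_div_iff₀ hn0]
    linarith
  by_cases hbdd : Filter.IsBoundedUnder (· ≤ ·) atTop a
  · have h := Filter.le_limsup_of_frequently_le hfreq hbdd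
    have hup : upperD β x = Filter.limsup a atTop := rfl
    rw [hmem.2] at hup
    linarith [hup ▸ h]
  · have hempty : {b : ℝ | ∀ᶠ (n:ℕ) in atTop, a n ≤ b} = ∅ := by
      ext b
      simp only [mem_setOf_eq, mem_empty_iff_false, iff_false]
      intro hb
      exact hbdd ⟨b, Filter.eventually_map.2 hb⟩
    have hzero : upperD β x = 0 := by
      have : upperD β x = Filter.limsup a atTop := rfl
      rw [this, Filter.limsup_eq, hempty, Real.sInf_empty]
    rw [hmem.2] at hzero
    linarith
end
end

section
/- Suppose λ(β) > 0. Then the irregular set D = {x ∈ (0,1] : liminf_{n→∞} (−log_β |I_n(x)|)/n < limsup_{n→∞} (−log_β |I_n(x)|)/n} is residual in [0,1]; that is, [0,1] \ D is of the first category (meagre) in [0,1]. -/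
open MeasureTheory Filter Set

noncomputable section

namespace Beta

variable {β : ℝ} (hβ : 1 < β)
include hβ

/-- T maps (0,1] to itself. -/
lemma T_mem {x : ℝ} (hx : x ∈ Ioc (0:ℝ) 1) : Tbeta β x ∈ Ioc (0:ℝ) 1 := by
  have hb0 : (0:ℝ) < β := lt_trans one_pos hβ
  have hbx : 0 < β * x := mul_pos hb0 hx.1
  constructor
  · have := Int.ceil_lt_add_one (β * x)
    simp only [Tbeta]; linarith
  · have := Int.le_ceil (β * x)
    simp only [Tbeta]; linarith

lemma iter_mem {x : ℝ} (hx : x ∈ Ioc (0:ℝ) 1) (n : ℕ) : (Tbeta β)^[n] x ∈ Ioc (0:ℝ) 1 := by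
  induction n with
  | zero => simpa using hx
  | succ n ih => rw [Function.iterate_succ_apply']; exact T_mem hβ ih

omit hβ in
/-- Iterate recurrence via digits. -/
lemma iter_succ (β x : ℝ) (n : ℕ) :
    (Tbeta β)^[n+1] x = β * (Tbeta β)^[n] x - eps β x n := by
  rw [Function.iterate_succ_apply']
  simp [Tbeta, eps]
  push_cast
  ring

lemma eps_nonneg {x : ℝ} (hx : x ∈ Ioc (0:ℝ) 1) (n : ℕ) : 0 ≤ eps β x n := by
  have hb0 : (0:ℝ) < β := lt_trans one_pos hβ
  have h := (iter_mem hβ hx n).1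
  have : (0:ℤ) < ⌈β * (Tbeta β)^[n] x⌉ := Int.ceil_pos.2 (mul_pos hb0 h)
  simp only [eps]; omega

/-- The left endpoint sequence. -/
def aseq (β x : ℝ) (n : ℕ) : ℝ := x - (β^n)⁻¹ * (Tbeta β)^[n] x

lemma aseq_succ (x : ℝ) (n : ℕ) :
    aseq β x (n+1) = aseq β x n + (eps β x n) * (β^(n+1))⁻¹ := by
  have hb0 : (0:ℝ) < β := lt_trans one_pos hβ
  have hbn : (β:ℝ)^n ≠ 0 := by positivity
  have hbn1 : (β:ℝ)^(n+1) ≠ 0 := by positivity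
  rw [aseq, aseq, iter_succ]
  rw [pow_succ]
  field_simp
  ring

lemma aseq_congr {x y : ℝ} {n : ℕ}
    (h : ∀ j < n, eps β y j = eps β x j) : aseq β y n = aseq β x n := by
  induction n with
  | zero => simp [aseq]
  | succ n ih =>
    rw [aseq_succ hβ, aseq_succ hβ, ih (fun j hj => h j (by omega)),
      h n (by omega)]

/-- The normalized length of the order-`n` cylinder: `|I_n(x)| = β^{-n} Mfun x n`. -/
def Mfun (β x : ℝ) (n : ℕ) : ℝ :=
  (Tbeta β)^[n] x + (Finset.range (n+1)).inf' Finset.nonempty_range_add_one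
    (fun j => β^(n-j) * (1 - (Tbeta β)^[j] x))

omit hβ in
lemma Mfun_zero (x : ℝ) : Mfun β x 0 = 1 := by
  simp [Mfun]

lemma Mfun_pos {x : ℝ} (hx : x ∈ Ioc (0:ℝ) 1) (n : ℕ) : 0 < Mfun β x n := by
  have h1 := (iter_mem hβ hx n).1
  have h2 : 0 ≤ (Finset.range (n+1)).inf' Finset.nonempty_range_add_one
      (fun j => β^(n-j) * (1 - (Tbeta β)^[j] x)) := by
    apply Finset.le_inf'
    intro j hj
    have := (iter_mem hβ hx j).2
    have hb : (0:ℝ) ≤ β^(n-j) := by positivity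
    nlinarith
  simp only [Mfun]; linarith

lemma Mfun_le_one {x : ℝ} (hx : x ∈ Ioc (0:ℝ) 1) (n : ℕ) : Mfun β x n ≤ 1 := by
  have h2 : (Finset.range (n+1)).inf' Finset.nonempty_range_add_one
      (fun j => β^(n-j) * (1 - (Tbeta β)^[j] x)) ≤ 1 - (Tbeta β)^[n] x := by
    have : n ∈ Finset.range (n+1) := by simp
    have h := Finset.inf'_le (fun j => β^(n-j) * (1 - (Tbeta β)^[j] x)) this
    simp only [Nat.sub_self, pow_zero, one_mul] at h
    exact h
  simp only [Mfun]; linarith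

/-- Recurrence for `Mfun`. -/
lemma Mfun_succ (x : ℝ) (n : ℕ) :
    Mfun β x (n+1) = min (β * Mfun β x n - eps β x n) 1 := by
  have hb0 : (0:ℝ) < β := lt_trans one_pos hβ
  set g : ℕ → ℝ := fun j => β^(n-j) * (1 - (Tbeta β)^[j] x) with hg
  have key : (Finset.range (n+2)).inf' Finset.nonempty_range_add_one
      (fun j => β^(n+1-j) * (1 - (Tbeta β)^[j] x))
      = min (1 - (Tbeta β)^[n+1] x)
        (β * (Finset.range (n+1)).inf' Finset.nonempty_range_add_one g) := by
    have estep : (Finset.range (n+2)).inf' Finset.nonempty_range_add_one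
        (fun j => β^(n+1-j) * (1 - (Tbeta β)^[j] x))
        = (insert (n+1) (Finset.range (n+1))).inf' (Finset.insert_nonempty _ _)
          (fun j => β^(n+1-j) * (1 - (Tbeta β)^[j] x)) :=
      Finset.inf'_congr Finset.nonempty_range_add_one Finset.range_add_one (fun _ _ => rfl)
    rw [estep, Finset.inf'_insert (H := Finset.nonempty_range_add_one)]
    congr 1
    · simp
    · -- inf' over range (n+1) of β^(n+1-j)(...) = β * inf' g
      have h1 : ∀ j ∈ Finset.range (n+1), β^(n+1-j) * (1 - (Tbeta β)^[j] x) = β * g j := by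
        intro j hj
        simp only [Finset.mem_range] at hj
        have : n+1-j = (n-j)+1 := by omega
        rw [hg]; simp only []
        rw [this, pow_succ]; ring
      have hcong : (Finset.range (n+1)).inf' Finset.nonempty_range_add_one
          (fun j => β^(n+1-j) * (1 - (Tbeta β)^[j] x))
          = (Finset.range (n+1)).inf' Finset.nonempty_range_add_one (fun j => β * g j) :=
        Finset.inf'_congr Finset.nonempty_range_add_one rfl h1
      rw [hcong]
      apply le_antisymm
      · obtain ⟨j₀, hj₀, hjeq⟩ := Finset.exists_mem_eq_inf' Finset.nonempty_range_add_one g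
        calc (Finset.range (n+1)).inf' Finset.nonempty_range_add_one (fun j => β * g j)
            ≤ β * g j₀ := Finset.inf'_le _ hj₀
          _ = β * _ := by rw [hjeq]
      · apply Finset.le_inf'
        intro j hj
        have := Finset.inf'_le g hj
        nlinarith
  simp only [Mfun, key, iter_succ]
  rw [← min_add_add_left]
  rw [min_comm]
  congr 1 <;> ring

lemma Mfun_congr {x y : ℝ} {n : ℕ} (h : ∀ j < n, eps β y j = eps β x j) :
    Mfun β y n = Mfun β x n := by
  induction n with
  | zero => rw [Mfun_zero, Mfun_zero]
  | succ n ih =>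
    rw [Mfun_succ hβ, Mfun_succ hβ, ih (fun j hj => h j (by omega)), h n (by omega)]

omit hβ in
lemma In_succ (β x : ℝ) (n : ℕ) :
    In β x (n+1) = In β x n ∩ {y | eps β y n = eps β x n} := by
  ext y
  simp only [In, mem_setOf_eq, mem_inter_iff, mem_sep_iff]
  constructor
  · rintro ⟨h1, h2⟩
    exact ⟨⟨h1, fun j hj => h2 j (by omega)⟩, h2 n (by omega)⟩
  · rintro ⟨⟨h1, h2⟩, h3⟩
    refine ⟨h1, fun j hj => ?_⟩
    rcases Nat.lt_succ_iff_lt_or_eq.1 hj with h | h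
    · exact h2 j h
    · exact h ▸ h3

omit hβ in
lemma In_anti (β x : ℝ) {m n : ℕ} (h : m ≤ n) : In β x n ⊆ In β x m := by
  intro y hy
  exact ⟨hy.1, fun j hj => hy.2 j (lt_of_lt_of_le hj h)⟩

omit hβ in
lemma In_congr {β x y : ℝ} {n : ℕ} (h : y ∈ In β x n) : In β y n = In β x n := by
  ext w
  exact ⟨fun hw => ⟨hw.1, fun j hj => (hw.2 j hj).trans (h.2 j hj)⟩,
    fun hw => ⟨hw.1, fun j hj => (hw.2 j hj).trans (h.2 j hj).symm⟩⟩

omit hβ in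
lemma self_mem_In {x : ℝ} (hx : x ∈ Ioc (0:ℝ) 1) (n : ℕ) : x ∈ In β x n :=
  ⟨hx, fun _ _ => rfl⟩

lemma iter_eq_of_mem_In {x y : ℝ} {n : ℕ} (h : y ∈ In β x n) :
    (Tbeta β)^[n] y = β^n * (y - aseq β x n) := by
  have hb0 : (0:ℝ) < β := lt_trans one_pos hβ
  have hbn : (β:ℝ)^n ≠ 0 := by positivity
  have h1 : aseq β y n = aseq β x n := aseq_congr hβ h.2
  rw [← h1, aseq]
  field_simp
  ring

omit hβ in
lemma Ioc_scale {a t c d y : ℝ} (ht : 0 < t) :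
    y ∈ Ioc (a + c*t) (a + d*t) ↔ (y - a)/t ∈ Ioc c d := by
  simp only [mem_Ioc, lt_div_iff₀ ht, div_le_iff₀ ht]
  constructor <;> intro h <;> constructor <;> nlinarith [h.1, h.2]

/-- The structure theorem : cylinders are explicit half-open intervals. -/
theorem In_eq {x : ℝ} (hx : x ∈ Ioc (0:ℝ) 1) (n : ℕ) :
    In β x n = Ioc (aseq β x n) (aseq β x n + (β^n)⁻¹ * Mfun β x n) := by
  have hb0 : (0:ℝ) < β := lt_trans one_pos hβ
  induction n with
  | zero =>
    ext y
    simp [In, aseq, Mfun_zero]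
  | succ n IH =>
    have hbn : (0:ℝ) < (β^n)⁻¹ := by positivity
    have hbn1 : (0:ℝ) < (β^(n+1))⁻¹ := by positivity
    have hBt : (β:ℝ)^(n+1) * (β^(n+1))⁻¹ = 1 := by
      have : (β:ℝ)^(n+1) ≠ 0 := by positivity
      field_simp
    set a := aseq β x n with ha
    set M := Mfun β x n with hM
    set e := eps β x n with he
    have hMpos : 0 < M := Mfun_pos hβ hx n
    have he0 : (0:ℝ) ≤ (e:ℝ) := by exact_mod_cast eps_nonneg hβ hx n
    have step1 : In β x (n+1) =
        Ioc a (a + (β^n)⁻¹ * M) ∩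
        Ioc (a + (e:ℝ) * (β^(n+1))⁻¹) (a + ((e:ℝ)+1) * (β^(n+1))⁻¹) := by
      rw [In_succ]
      ext y
      simp only [mem_inter_iff, mem_setOf_eq]
      constructor
      · rintro ⟨hyIn, hye⟩
        have hyIoc : y ∈ Ioc a (a + (β^n)⁻¹ * M) := IH ▸ hyIn
        have hT := iter_eq_of_mem_In hβ hyIn
        refine ⟨hyIoc, ?_⟩
        rw [Ioc_scale hbn1, div_eq_mul_inv, inv_inv]
        have hTy : (y - a) * β^(n+1) = β * (Tbeta β)^[n] y := by
          rw [hT, ← ha, pow_succ]; ring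
        rw [hTy]
        have hceil : ⌈β * (Tbeta β)^[n] y⌉ = e + 1 := by
          rw [he]; simp only [eps] at hye ⊢; omega
        have h1 := Int.le_ceil (β * (Tbeta β)^[n] y)
        have h2 := Int.ceil_lt_add_one (β * (Tbeta β)^[n] y)
        rw [hceil] at h1 h2
        push_cast at h1 h2
        exact ⟨by linarith, by linarith⟩
      · rintro ⟨hyIoc, hymem⟩
        have hyIn : y ∈ In β x n := by rw [IH]; exact hyIoc
        have hT := iter_eq_of_mem_In hβ hyIn
        refine ⟨hyIn, ?_⟩
        rw [Ioc_scale hbn1, div_eq_mul_inv, inv_inv] at hymem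
        have hTy : (y - a) * β^(n+1) = β * (Tbeta β)^[n] y := by
          rw [hT, ← ha, pow_succ]; ring
        rw [hTy] at hymem
        have hceil : ⌈β * (Tbeta β)^[n] y⌉ = e + 1 := by
          apply le_antisymm
          · exact Int.ceil_le.2 (by push_cast; exact hymem.2)
          · have : (e:ℝ) < β * (Tbeta β)^[n] y := hymem.1
            have := Int.lt_ceil.2 this
            omega
        rw [he] at hceil
        simp only [eps] at hceil ⊢
        omega
    rw [step1, Set.Ioc_inter_Ioc]
    have hmax : a ⊔ (a + (e:ℝ) * (β^(n+1))⁻¹) = a + (e:ℝ) * (β^(n+1))⁻¹ := by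
      apply max_eq_right
      nlinarith
    have haseq : aseq β x (n+1) = a + (e:ℝ) * (β^(n+1))⁻¹ := by
      rw [aseq_succ hβ, ← ha, ← he]
    have htβ : (β^(n+1))⁻¹ * β = (β^n)⁻¹ := by
      rw [pow_succ]
      have h1 : (β:ℝ)^n ≠ 0 := by positivity
      have h2 : (β:ℝ) ≠ 0 := by positivity
      field_simp
    have hmin : (a + (β^n)⁻¹ * M) ⊓ (a + ((e:ℝ)+1) * (β^(n+1))⁻¹)
        = aseq β x (n+1) + (β^(n+1))⁻¹ * Mfun β x (n+1) := by
      rw [haseq, Mfun_succ hβ, ← hM, ← he]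
      rcases le_total (β * M - (e:ℝ)) 1 with h | h
      · rw [min_eq_left h, min_eq_left (by nlinarith)]
        have h1 : (β:ℝ)^n ≠ 0 := by positivity
        have h2 : (β:ℝ)^(n+1) ≠ 0 := by positivity
        field_simp
        ring
      · rw [min_eq_right h, min_eq_right (by nlinarith)]
        ring
    rw [hmax, hmin, ← haseq]

/-- Length of cylinders. -/
lemma len_In {x : ℝ} (hx : x ∈ Ioc (0:ℝ) 1) (n : ℕ) :
    len (In β x n) = (β^n)⁻¹ * Mfun β x n := by
  have hb0 : (0:ℝ) < β := lt_trans one_pos hβ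
  rw [In_eq hβ hx n, len, Real.volume_Ioc]
  have h1 : aseq β x n + (β^n)⁻¹ * Mfun β x n - aseq β x n = (β^n)⁻¹ * Mfun β x n := by
    ring
  rw [h1, ENNReal.toReal_ofReal]
  have := Mfun_pos hβ hx n
  positivity

omit hβ in
/-- If the digits of `1` from position `n` are zero for `k` steps,
the iterates just multiply by `β`. -/
lemma iter_one_zero_block {n k : ℕ} (h : ∀ j < k, eps β 1 (n + j) = 0) :
    (Tbeta β)^[n + k] (1:ℝ) = β^k * (Tbeta β)^[n] 1 := by
  induction k with
  | zero => simp
  | succ k ih =>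
    have : n + (k+1) = (n + k) + 1 := by ring
    rw [this, iter_succ, ih (fun j hj => h j (by omega)), h k (by omega)]
    push_cast
    rw [pow_succ]
    ring

omit hβ in
lemma one_mem : (1:ℝ) ∈ Ioc (0:ℝ) 1 := ⟨one_pos, le_refl 1⟩

/-- The set defining `tseq` is bounded. -/
lemma tseq_bddAbove (n : ℕ) : BddAbove {k : ℕ | ∀ j < k, eps β 1 (n + j) = 0} := by
  have hb0 : (0:ℝ) < β := lt_trans one_pos hβ
  have hTpos : 0 < (Tbeta β)^[n] (1:ℝ) := (iter_mem hβ one_mem n).1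
  obtain ⟨K, hK⟩ := pow_unbounded_of_one_lt (((Tbeta β)^[n] (1:ℝ))⁻¹) hβ
  refine ⟨K, fun k hk => ?_⟩
  by_contra hlt
  push_neg at hlt
  have h1 : (Tbeta β)^[n + k] (1:ℝ) = β^k * (Tbeta β)^[n] 1 := iter_one_zero_block hk
  have h2 : (Tbeta β)^[n + k] (1:ℝ) ≤ 1 := (iter_mem hβ one_mem (n+k)).2
  have h3 : (β:ℝ)^K ≤ β^k := pow_le_pow_right₀ (le_of_lt hβ) (le_of_lt hlt)
  have h4 : ((Tbeta β)^[n] (1:ℝ))⁻¹ < β^k := lt_of_lt_of_le hK h3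
  have h5 : 1 < β^k * (Tbeta β)^[n] 1 := by
    have := mul_lt_mul_of_pos_right h4 hTpos
    rwa [inv_mul_cancel₀ (ne_of_gt hTpos)] at this
  linarith [h1 ▸ h2]

lemma tseq_mem (n : ℕ) : ∀ j < tseq β n, eps β 1 (n + j) = 0 := by
  have h0 : 0 ∈ {k : ℕ | ∀ j < k, eps β 1 (n + j) = 0} := by simp
  have := Nat.sSup_mem ⟨0, h0⟩ (tseq_bddAbove hβ n)
  exact this

lemma tseq_max (n : ℕ) : eps β 1 (n + tseq β n) ≠ 0 := by
  intro hzero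
  have hmem : tseq β n + 1 ∈ {k : ℕ | ∀ j < k, eps β 1 (n + j) = 0} := by
    intro j hj
    rcases Nat.lt_succ_iff_lt_or_eq.1 hj with h | h
    · exact tseq_mem hβ n j h
    · exact h ▸ hzero
  have := le_csSup (tseq_bddAbove hβ n) hmem
  simp only [tseq] at this
  omega

/-- Upper bound for `T^n 1`. -/
lemma iter_one_le (n : ℕ) : (Tbeta β)^[n] (1:ℝ) ≤ (β^(tseq β n))⁻¹ := by
  have hb0 : (0:ℝ) < β := lt_trans one_pos hβ
  have h1 : (Tbeta β)^[n + tseq β n] (1:ℝ) = β^(tseq β n) * (Tbeta β)^[n] 1 :=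
    iter_one_zero_block (tseq_mem hβ n)
  have h2 : (Tbeta β)^[n + tseq β n] (1:ℝ) ≤ 1 := (iter_mem hβ one_mem _).2
  rw [h1] at h2
  have hp : (0:ℝ) < β^(tseq β n) := by positivity
  calc (Tbeta β)^[n] (1:ℝ) = (β^(tseq β n))⁻¹ * (β^(tseq β n) * (Tbeta β)^[n] 1) := by
        field_simp
    _ ≤ (β^(tseq β n))⁻¹ * 1 := by
        apply mul_le_mul_of_nonneg_left h2 (by positivity)
    _ = (β^(tseq β n))⁻¹ := mul_one _

/-- Lower bound for `T^n 1`. -/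
lemma lt_iter_one (n : ℕ) : (β^(tseq β n + 1))⁻¹ < (Tbeta β)^[n] (1:ℝ) := by
  have hb0 : (0:ℝ) < β := lt_trans one_pos hβ
  have h1 : (Tbeta β)^[n + tseq β n] (1:ℝ) = β^(tseq β n) * (Tbeta β)^[n] 1 :=
    iter_one_zero_block (tseq_mem hβ n)
  have h2 := tseq_max hβ n
  have h3 : 0 ≤ eps β 1 (n + tseq β n) := eps_nonneg hβ one_mem _
  have h4 : 1 ≤ eps β 1 (n + tseq β n) := by omega
  -- so ⌈β T^{n+t} 1⌉ ≥ 2, hence β T^{n+t} 1 > 1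
  have h5 : (2:ℤ) ≤ ⌈β * (Tbeta β)^[n + tseq β n] (1:ℝ)⌉ := by
    simp only [eps] at h4; omega
  have h6 : (1:ℝ) < β * (Tbeta β)^[n + tseq β n] (1:ℝ) := by
    by_contra hle
    push_neg at hle
    have : ⌈β * (Tbeta β)^[n + tseq β n] (1:ℝ)⌉ ≤ 1 := Int.ceil_le.2 (by exact_mod_cast hle)
    omega
  rw [h1] at h6
  have hp : (0:ℝ) < β^(tseq β n + 1) := by positivity
  rw [inv_lt_iff_one_lt_mul₀ hp]
  calc (1:ℝ) < β * (β^(tseq β n) * (Tbeta β)^[n] 1) := h6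
    _ = (Tbeta β)^[n] 1 * β^(tseq β n + 1) := by rw [pow_succ]; ring

omit hβ in
lemma Gam_mono : Monotone (Gam β) := fun m n h =>
  Finset.sup_mono (Finset.Icc_subset_Icc_right h)

omit hβ in
lemma tseq_le_Gam {j n : ℕ} (h1 : 1 ≤ j) (h2 : j ≤ n) : tseq β j ≤ Gam β n :=
  Finset.le_sup (Finset.mem_Icc.2 ⟨h1, h2⟩)

/-- The key universal lower bound. -/
lemma key_lb (ℓ : ℕ) {y : ℝ} (hy : y ∈ Ioc (0:ℝ) 1) :
    (β^(Gam β ℓ + 1))⁻¹ ≤ β^ℓ * (1 - y) + (Tbeta β)^[ℓ] y := by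
  have hb0 : (0:ℝ) < β := lt_trans one_pos hβ
  by_cases hagree : ∀ j < ℓ, eps β y j = eps β 1 j
  · -- agreeing case : the quantity equals T^ℓ 1
    have ha : aseq β y ℓ = aseq β 1 ℓ := aseq_congr hβ hagree
    have hbl : (β:ℝ)^ℓ ≠ 0 := by positivity
    have heq : β^ℓ * (1 - y) + (Tbeta β)^[ℓ] y = (Tbeta β)^[ℓ] 1 := by
      simp only [aseq] at ha
      have : (Tbeta β)^[ℓ] y = β^ℓ * (y - 1) + (Tbeta β)^[ℓ] 1 := by
        field_simp at ha
        nlinarith [ha]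
      rw [this]; ring
    rw [heq]
    rcases Nat.eq_zero_or_pos ℓ with h0 | hpos
    · subst h0
      simp only [Function.iterate_zero_apply]
      rw [inv_le_one_iff₀]
      right
      exact one_le_pow₀ (le_of_lt hβ)
    · have h1 : (β^(tseq β ℓ + 1))⁻¹ < (Tbeta β)^[ℓ] 1 := lt_iter_one hβ ℓ
      have h2 : tseq β ℓ ≤ Gam β ℓ := tseq_le_Gam hpos (le_refl _)
      have h3 : (β^(Gam β ℓ + 1))⁻¹ ≤ (β^(tseq β ℓ + 1))⁻¹ := by
        apply inv_anti₀ (by positivity)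
        exact pow_le_pow_right₀ (le_of_lt hβ) (by omega)
      linarith
  · -- disagreeing case
    push_neg at hagree
    classical
    obtain ⟨j, hj, hne⟩ := hagree
    -- least disagreement index
    have hex : ∃ d, d < ℓ ∧ eps β y d ≠ eps β 1 d := ⟨j, hj, hne⟩
    obtain ⟨d, ⟨hdℓ, hdne⟩, hdmin⟩ := Nat.lt_wfRel.wf.has_min _ hex
    have hdagree : ∀ i < d, eps β y i = eps β 1 i := by
      intro i hi
      by_contra hcon
      have hi2 : i < ℓ := lt_trans hi hdℓ
      exact absurd hi (hdmin i ⟨hi2, hcon⟩)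
    have ha : aseq β y d = aseq β 1 d := aseq_congr hβ hdagree
    have hbd : (β:ℝ)^d ≠ 0 := by positivity
    have hTd : (Tbeta β)^[d] y = β^d * (y - 1) + (Tbeta β)^[d] 1 := by
      simp only [aseq] at ha
      field_simp at ha
      nlinarith [ha]
    have hbdpos : (0:ℝ) < β^d := by positivity
    have hTle : (Tbeta β)^[d] y ≤ (Tbeta β)^[d] 1 := by nlinarith [hy.2]
    have hceils : ⌈β * (Tbeta β)^[d] y⌉ ≤ ⌈β * (Tbeta β)^[d] 1⌉ :=
      Int.ceil_le_ceil (mul_le_mul_of_nonneg_left hTle (le_of_lt hb0))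
    have hne2 : ⌈β * (Tbeta β)^[d] y⌉ ≠ ⌈β * (Tbeta β)^[d] 1⌉ := by
      simp only [eps] at hdne; omega
    have hlt : ⌈β * (Tbeta β)^[d] y⌉ ≤ ⌈β * (Tbeta β)^[d] 1⌉ - 1 := by omega
    have h6 : β * (Tbeta β)^[d] y ≤ (⌈β * (Tbeta β)^[d] 1⌉ : ℝ) - 1 := by
      calc β * (Tbeta β)^[d] y ≤ (⌈β * (Tbeta β)^[d] y⌉ : ℝ) := Int.le_ceil _
        _ ≤ (⌈β * (Tbeta β)^[d] 1⌉ : ℝ) - 1 := by exact_mod_cast hlt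
    have h7 : (Tbeta β)^[d+1] (1:ℝ) = β * (Tbeta β)^[d] 1 - ⌈β * (Tbeta β)^[d] 1⌉ + 1 := by
      rw [Function.iterate_succ_apply']; rfl
    have hps : (β:ℝ)^(d+1) = β^d * β := pow_succ β d
    have hd2 : β * ((Tbeta β)^[d] 1 - (Tbeta β)^[d] y) = β^(d+1) * (1 - y) := by
      rw [hTd, hps]; ring
    have h8 : (Tbeta β)^[d+1] (1:ℝ) ≤ β^(d+1) * (1 - y) := by linarith [h6, h7, hd2]
    have h9 : (β^(Gam β ℓ + 1))⁻¹ ≤ (Tbeta β)^[d+1] (1:ℝ) := by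
      have hlt2 : (β^(tseq β (d+1) + 1))⁻¹ < (Tbeta β)^[d+1] (1:ℝ) := lt_iter_one hβ (d+1)
      have hle2 : tseq β (d+1) ≤ Gam β ℓ := tseq_le_Gam (by omega) (by omega)
      have h3 : (β^(Gam β ℓ + 1))⁻¹ ≤ (β^(tseq β (d+1) + 1))⁻¹ := by
        apply inv_anti₀ (by positivity)
        exact pow_le_pow_right₀ (le_of_lt hβ) (by omega)
      linarith
    have h10 : β^(d+1) * (1 - y) ≤ β^ℓ * (1 - y) := by
      apply mul_le_mul_of_nonneg_right
      · exact pow_le_pow_right₀ (le_of_lt hβ) (by omega)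
      · linarith [hy.2]
    have hTℓy : 0 < (Tbeta β)^[ℓ] y := (iter_mem hβ hy ℓ).1
    linarith

/-- Universal lower bound on `Mfun`. -/
lemma Mfun_lb {x : ℝ} (hx : x ∈ Ioc (0:ℝ) 1) (n : ℕ) :
    (β^(Gam β n + 1))⁻¹ ≤ Mfun β x n := by
  have hb0 : (0:ℝ) < β := lt_trans one_pos hβ
  obtain ⟨j₀, hj₀mem, hjeq⟩ := Finset.exists_mem_eq_inf' (s := Finset.range (n+1))
    Finset.nonempty_range_add_one (fun j => β^(n-j) * (1 - (Tbeta β)^[j] x))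
  have hj₀ : j₀ ≤ n := by
    simp only [Finset.mem_range] at hj₀mem; omega
  have hkey := key_lb hβ (n - j₀) (iter_mem hβ hx j₀)
  have hiter : (Tbeta β)^[n-j₀] ((Tbeta β)^[j₀] x) = (Tbeta β)^[n] x := by
    rw [← Function.iterate_add_apply, Nat.sub_add_cancel hj₀]
  rw [hiter] at hkey
  have hmono : (β^(Gam β n + 1))⁻¹ ≤ (β^(Gam β (n - j₀) + 1))⁻¹ := by
    apply inv_anti₀ (by positivity)
    apply pow_le_pow_right₀ (le_of_lt hβ)
    have := Gam_mono (β := β) (Nat.sub_le n j₀)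
    omega
  have : Mfun β x n = (Tbeta β)^[n] x + β^(n-j₀) * (1 - (Tbeta β)^[j₀] x) := by
    rw [Mfun, ← hjeq]
  rw [this]
  linarith

/-- `Mfun` at `1` is the orbit of `1`. -/
lemma Mfun_one (j : ℕ) : Mfun β 1 j = (Tbeta β)^[j] 1 := by
  have hb0 : (0:ℝ) < β := lt_trans one_pos hβ
  have h0 : (Finset.range (j+1)).inf' Finset.nonempty_range_add_one
      (fun i => β^(j-i) * (1 - (Tbeta β)^[i] (1:ℝ))) = 0 := by
    apply le_antisymm
    · have h0m : 0 ∈ Finset.range (j+1) := by simp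
      have := Finset.inf'_le (fun i => β^(j-i) * (1 - (Tbeta β)^[i] (1:ℝ))) h0m
      simp only [Nat.sub_zero, Function.iterate_zero_apply, sub_self, mul_zero] at this
      exact this
    · apply Finset.le_inf'
      intro i hi
      have := (iter_mem hβ one_mem i).2
      have hb : (0:ℝ) ≤ β^(j-i) := by positivity
      nlinarith
  rw [Mfun, h0, add_zero]

/-- The negative log of the cylinder length. -/
lemma neg_logb_len {x : ℝ} (hx : x ∈ Ioc (0:ℝ) 1) (n : ℕ) :
    -Real.logb β (len (In β x n)) = n - Real.logb β (Mfun β x n) := by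
  have hb0 : (0:ℝ) < β := lt_trans one_pos hβ
  have hM : 0 < Mfun β x n := Mfun_pos hβ hx n
  rw [len_In hβ hx n, Real.logb_mul (by positivity) (ne_of_gt hM),
    Real.logb_inv, Real.logb_pow, Real.logb_self_eq_one hβ]
  ring

/-- The core construction: inside any open set touching `(0,1)`, and for any `j`,
there is a nonempty open set of points whose cylinder of order `q+j` has the same
(normalized) length as the cylinder of order `j` at `1`, with `q ≥ K` uniform in `j`. -/
lemma core {U : Set ℝ} (hU : IsOpen U) (hne : (U ∩ Ioo (0:ℝ) 1).Nonempty) (K : ℕ) :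
    ∃ q : ℕ, K ≤ q ∧ ∀ j : ℕ, ∃ V : Set ℝ, IsOpen V ∧ V.Nonempty ∧ V ⊆ U ∧
      ∀ x ∈ V, x ∈ Ioc (0:ℝ) 1 ∧ len (In β x (q+j)) = (β^(q+j))⁻¹ * Mfun β 1 j := by
  have hb0 : (0:ℝ) < β := lt_trans one_pos hβ
  obtain ⟨z, hzU, hz01⟩ := hne
  have hz : z ∈ Ioc (0:ℝ) 1 := ⟨hz01.1, le_of_lt hz01.2⟩
  obtain ⟨ε, hε, hball⟩ := Metric.isOpen_iff.1 hU z hzU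
  obtain ⟨p, hp⟩ := pow_unbounded_of_one_lt ε⁻¹ hβ
  have hβp : (β^p)⁻¹ < ε := by
    have h1 : (0:ℝ) < β^p := by positivity
    rw [inv_lt_comm₀ h1 hε]
    exact hp
  set M : ℝ := Mfun β z p with hMdef
  have hMpos : 0 < M := Mfun_pos hβ hz p
  have hM1 : M ≤ 1 := Mfun_le_one hβ hz p
  have hsub : In β z p ⊆ U := by
    intro w hw
    apply hball
    rw [Metric.mem_ball, Real.dist_eq]
    have hstr := In_eq hβ hz p
    have hwIoc : w ∈ Ioc (aseq β z p) (aseq β z p + (β^p)⁻¹ * M) := hstr ▸ hw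
    have hzIoc : z ∈ Ioc (aseq β z p) (aseq β z p + (β^p)⁻¹ * M) :=
      hstr ▸ self_mem_In hz p
    have h1 : (0:ℝ) < (β^p)⁻¹ := by positivity
    rw [abs_sub_lt_iff]
    constructor <;> nlinarith [hwIoc.1, hwIoc.2, hzIoc.1, hzIoc.2]
  obtain ⟨k₁, hk₁⟩ := pow_unbounded_of_one_lt M⁻¹ hβ
  set k := max k₁ K with hkdef
  have hkM : 1 ≤ β^k * M := by
    have h1 : (β:ℝ)^k₁ ≤ β^k := pow_le_pow_right₀ (le_of_lt hβ) (le_max_left _ _)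
    have h2 : M⁻¹ < β^k := lt_of_lt_of_le hk₁ h1
    have h3 := mul_lt_mul_of_pos_right h2 hMpos
    rw [inv_mul_cancel₀ (ne_of_gt hMpos)] at h3
    exact h3.le
  have hkM' : (β^k)⁻¹ ≤ M := by
    have h1 : (β:ℝ)^k ≠ 0 := by positivity
    have h2 := mul_le_mul_of_nonneg_left hkM (by positivity : (0:ℝ) ≤ ((β:ℝ)^k)⁻¹)
    rw [mul_one, ← mul_assoc, inv_mul_cancel₀ h1, one_mul] at h2
    exact h2
  refine ⟨p + k, le_trans (le_max_right k₁ K) (Nat.le_add_left k p), ?_⟩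
  intro j
  set a : ℝ := aseq β z p with hadef
  set y : ℝ := a + (β^(p+k))⁻¹ with hydef
  have hstr := In_eq hβ hz p
  have hyIn : y ∈ In β z p := by
    rw [hstr]
    constructor
    · have : (0:ℝ) < (β^(p+k))⁻¹ := by positivity
      simp only [hydef]
      linarith
    · have h1 : (β:ℝ)^(p+k) = β^p * β^k := pow_add β p k
      have h2 : ((β:ℝ)^(p+k))⁻¹ = (β^p)⁻¹ * (β^k)⁻¹ := by rw [h1, mul_inv]
      have h3 : (β^p)⁻¹ * (β^k)⁻¹ ≤ (β^p)⁻¹ * M :=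
        mul_le_mul_of_nonneg_left hkM' (by positivity)
      simp only [hydef]
      linarith [h2 ▸ h3]
  have hy01 : y ∈ Ioc (0:ℝ) 1 := hyIn.1
  have hTp : (Tbeta β)^[p] y = (β^k)⁻¹ := by
    have h := iter_eq_of_mem_In hβ hyIn
    rw [h]
    have h1 : (β:ℝ)^p ≠ 0 := by positivity
    have h2 : (β:ℝ)^k ≠ 0 := by positivity
    simp only [hydef, ← hadef]
    rw [pow_add]
    field_simp
    ring
  -- the zero block
  have hblock : ∀ i, i ≤ k →
      (Tbeta β)^[p+i] y = (β^(k-i))⁻¹ ∧ (∀ i' < i, eps β y (p+i') = 0) := by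
    intro i
    induction i with
    | zero => intro _; exact ⟨by simpa using hTp, by omega⟩
    | succ i ih =>
      intro hik
      obtain ⟨h1, h2⟩ := ih (by omega)
      have hki : k - i = (k - (i+1)) + 1 := by omega
      have hle : β * (β^(k-i))⁻¹ ≤ 1 := by
        rw [hki, pow_succ, mul_inv]
        have h3 : (0:ℝ) < (β^(k-(i+1)))⁻¹ := by positivity
        have h4 : (β:ℝ) ≠ 0 := ne_of_gt hb0
        have h5 : (1:ℝ) ≤ β^(k-(i+1)) := one_le_pow₀ (le_of_lt hβ)
        calc β * ((β^(k-(i+1)))⁻¹ * β⁻¹) = (β^(k-(i+1)))⁻¹ := by field_simp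
          _ ≤ 1 := by rw [inv_le_one_iff₀]; right; exact h5
      have hpos2 : (0:ℝ) < β * (β^(k-i))⁻¹ := by positivity
      have hceil : ⌈β * (β^(k-i))⁻¹⌉ = 1 := by
        apply le_antisymm
        · exact Int.ceil_le.2 (by exact_mod_cast hle)
        · exact Int.ceil_pos.2 hpos2
      have heps : eps β y (p+i) = 0 := by
        simp only [eps, h1, hceil, sub_self]
      have hnext : (Tbeta β)^[p+(i+1)] y = (β^(k-(i+1)))⁻¹ := by
        have : p + (i+1) = (p+i) + 1 := by omega
        rw [this, iter_succ, h1, heps]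
        push_cast
        rw [hki, pow_succ, mul_inv]
        have h4 : (β:ℝ) ≠ 0 := ne_of_gt hb0
        field_simp
        ring
      refine ⟨hnext, fun i' hi' => ?_⟩
      rcases Nat.lt_succ_iff_lt_or_eq.1 hi' with h | h
      · exact h2 i' h
      · exact h ▸ heps
  have hTq : (Tbeta β)^[p+k] y = 1 := by
    have := (hblock k le_rfl).1
    simpa using this
  have hzero : ∀ i < k, eps β y (p+i) = 0 := (hblock k le_rfl).2
  have htail : ∀ i, (Tbeta β)^[p+k+i] y = (Tbeta β)^[i] 1 := by
    intro i
    have : p + k + i = i + (p + k) := by omega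
    rw [this, Function.iterate_add_apply, hTq]
  have hepstail : ∀ i, eps β y (p+k+i) = eps β 1 i := by
    intro i
    simp only [eps, htail i]
  have hMyp : Mfun β y p = M := Mfun_congr hβ hyIn.2
  have hclimb : ∀ i, i ≤ k → Mfun β y (p+i) = min (β^i * M) 1 := by
    intro i
    induction i with
    | zero =>
      intro _
      simp only [add_zero, pow_zero, one_mul, hMyp]
      exact (min_eq_left hM1).symm
    | succ i ih =>
      intro hik
      have hprev := ih (by omega)
      have : p + (i+1) = (p+i) + 1 := by omega
      rw [this, Mfun_succ hβ, hprev, hzero i (by omega)]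
      push_cast
      rw [sub_zero]
      rcases le_total ((β:ℝ)^i * M) 1 with h | h
      · rw [min_eq_left h, pow_succ]
        ring_nf
      · have h1 : (1:ℝ) ≤ β := le_of_lt hβ
        have h2 : (1:ℝ) ≤ β^(i+1) * M := by
          have : (β:ℝ)^i * M ≤ β^(i+1) * M := by
            apply mul_le_mul_of_nonneg_right _ (le_of_lt hMpos)
            exact pow_le_pow_right₀ h1 (by omega)
          linarith
        rw [min_eq_right h, mul_one, min_eq_right h1, min_eq_right h2]
  have hMq : Mfun β y (p+k) = 1 := by
    rw [hclimb k le_rfl, min_eq_right hkM]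
  have hMtail : ∀ i, Mfun β y (p+k+i) = Mfun β 1 i := by
    intro i
    induction i with
    | zero => simpa [Mfun_zero] using hMq
    | succ i ih =>
      have : p + k + (i+1) = (p+k+i) + 1 := by omega
      rw [this, Mfun_succ hβ, ih, hepstail i, ← Mfun_succ hβ]
  set n := p + k + j with hndef
  have hMone : 0 < Mfun β 1 j := by
    rw [Mfun_one hβ]
    exact (iter_mem hβ one_mem j).1
  have hstr2 := In_eq hβ hy01 n
  have hMyn : Mfun β y n = Mfun β 1 j := hMtail j
  have hVsub : Ioo (aseq β y n) (aseq β y n + (β^n)⁻¹ * Mfun β 1 j) ⊆ In β y n := by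
    rw [hstr2, hMyn]
    exact Ioo_subset_Ioc_self
  have hInsub : In β y n ⊆ U := by
    intro w hw
    apply hsub
    have h1 : In β y n ⊆ In β y p := In_anti β y (by omega)
    have h2 : In β y p = In β z p := In_congr hyIn
    exact h2 ▸ h1 hw
  refine ⟨Ioo (aseq β y n) (aseq β y n + (β^n)⁻¹ * Mfun β 1 j), isOpen_Ioo, ?_, ?_, ?_⟩
  · apply Set.nonempty_Ioo.2
    have : (0:ℝ) < (β^n)⁻¹ * Mfun β 1 j := by positivity
    linarith
  · exact fun w hw => hInsub (hVsub hw)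
  · intro x hx
    have hxIn : x ∈ In β y n := hVsub hx
    have hx01 : x ∈ Ioc (0:ℝ) 1 := hxIn.1
    refine ⟨hx01, ?_⟩
    rw [len_In hβ hx01, Mfun_congr hβ hxIn.2, hMyn]

/-- Log of scaled lengths. -/
lemma neg_logb_scaled {m : ℝ} (hm : 0 < m) (n : ℕ) :
    -Real.logb β ((β^n)⁻¹ * m) = n - Real.logb β m := by
  have hb0 : (0:ℝ) < β := lt_trans one_pos hβ
  rw [Real.logb_mul (by positivity) (ne_of_gt hm), Real.logb_inv, Real.logb_pow,
    Real.logb_self_eq_one hβ]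
  ring

omit hβ in
/-- Criterion for nowhere density. -/
lemma nd_helper {s : Set ℝ}
    (h : ∀ U : Set ℝ, IsOpen U → U.Nonempty →
      ∃ V : Set ℝ, IsOpen V ∧ V.Nonempty ∧ V ⊆ U ∧ V ∩ s = ∅) :
    IsNowhereDense s := by
  rw [IsNowhereDense]
  rcases Set.eq_empty_or_nonempty (interior (closure s)) with he | hne
  · exact he
  · exfalso
    obtain ⟨V, hVo, ⟨v, hv⟩, hVU, hVs⟩ := h (interior (closure s)) isOpen_interior hne
    have hvcl : v ∈ closure s := interior_subset (hVU hv)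
    obtain ⟨w, hwV, hws⟩ := mem_closure_iff.1 hvcl V hVo hv
    exact eq_empty_iff_forall_notMem.1 hVs w ⟨hwV, hws⟩

omit hβ in
/-- An open set containing a point of `(0,1]` touches `(0,1)`. -/
lemma touch {U : Set ℝ} (hU : IsOpen U) {x : ℝ} (hxU : x ∈ U) (hx : x ∈ Ioc (0:ℝ) 1) :
    (U ∩ Ioo (0:ℝ) 1).Nonempty := by
  rcases lt_or_eq_of_le hx.2 with h | h
  · exact ⟨x, hxU, hx.1, h⟩
  · subst h
    obtain ⟨ε, hε, hball⟩ := Metric.isOpen_iff.1 hU _ hxU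
    set w : ℝ := max (1 - ε/2) (1/2) with hwdef
    have hw1 : w < 1 := max_lt (by linarith) (by norm_num)
    have hw0 : 0 < w := lt_of_lt_of_le (by norm_num) (le_max_right _ _)
    have hwU : w ∈ U := by
      apply hball
      rw [Metric.mem_ball, Real.dist_eq, abs_sub_lt_iff]
      have hwge : 1 - ε/2 ≤ w := le_max_left _ _
      exact ⟨by linarith, by linarith⟩
    exact ⟨w, hwU, hw0, hw1⟩

/-- The sets defining failure of `liminf ≤ 1` are nowhere dense. -/
lemma F_nd (N : ℕ) : IsNowhereDense {x : ℝ | x ∈ Ioc (0:ℝ) 1 ∧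
    ∀ n : ℕ, N ≤ n → -Real.logb β (len (In β x n))/(n:ℝ) ≠ 1} := by
  apply nd_helper
  intro U hUo hUne
  by_cases hT : (U ∩ Ioo (0:ℝ) 1).Nonempty
  · obtain ⟨q, hqK, hcore⟩ := core hβ hUo hT (max N 1)
    obtain ⟨V, hVo, hVne, hVU, hVprop⟩ := hcore 0
    refine ⟨V, hVo, hVne, hVU, ?_⟩
    rw [eq_empty_iff_forall_notMem]
    rintro x ⟨hxV, hx01, hxcond⟩
    obtain ⟨hx01', hlen⟩ := hVprop x hxV
    have hq1 : 1 ≤ q := le_trans (le_max_right N 1) hqK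
    have hqN : N ≤ q := le_trans (le_max_left N 1) hqK
    have hqR : ((q:ℝ)) ≠ 0 := by
      have : (0:ℝ) < q := by exact_mod_cast hq1
      linarith
    have hr1 : -Real.logb β (len (In β x q)) / (q:ℝ) = 1 := by
      have h0 : len (In β x q) = (β^q)⁻¹ * 1 := by
        simpa [Mfun_zero] using hlen
      rw [h0, neg_logb_scaled hβ one_pos, Real.logb_one, sub_zero, div_self hqR]
    exact hxcond q hqN hr1
  · refine ⟨U, hUo, hUne, subset_rfl, ?_⟩
    rw [eq_empty_iff_forall_notMem]
    rintro x ⟨hxU, hx01, _⟩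
    exact hT (touch hUo hxU hx01)

/-- The sets defining failure of `limsup ≥ 1 + λ/4` are nowhere dense. -/
lemma G_nd (hlam : 0 < lam β) (N : ℕ) : IsNowhereDense {x : ℝ | x ∈ Ioc (0:ℝ) 1 ∧
    ∀ n : ℕ, N ≤ n → -Real.logb β (len (In β x n))/(n:ℝ) ≤ 1 + lam β / 4} := by
  apply nd_helper
  intro U hUo hUne
  by_cases hT : (U ∩ Ioo (0:ℝ) 1).Nonempty
  · obtain ⟨q, hqK, hcore⟩ := core hβ hUo hT (max N 1)
    have hq1 : 1 ≤ q := le_trans (le_max_right N 1) hqK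
    have hqN : N ≤ q := le_trans (le_max_left N 1) hqK
    have cob : IsCoboundedUnder (· ≤ ·) atTop (fun n : ℕ => (Gam β n : ℝ)/n) :=
      isCoboundedUnder_le_of_le atTop (fun n => by positivity)
    have hhalf : lam β / 2 < Filter.limsup (fun n : ℕ => (Gam β n : ℝ)/n) atTop := by
      have h1 : lam β / 2 < lam β := by linarith
      exact h1
    have hfreq := Filter.frequently_lt_of_lt_limsup cob hhalf
    obtain ⟨n₀, hn₀ge, hn₀⟩ := Filter.frequently_atTop.1 hfreq (max q 1)
    have hqn₀ : q ≤ n₀ := le_trans (le_max_left q 1) hn₀ge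
    have h1n₀ : 1 ≤ n₀ := le_trans (le_max_right q 1) hn₀ge
    obtain ⟨j₀, hj₀mem, hj₀eq⟩ := Finset.exists_mem_eq_sup (Finset.Icc 1 n₀)
      (Finset.nonempty_Icc.2 h1n₀) (tseq β)
    obtain ⟨hj₀1, hj₀n₀⟩ := Finset.mem_Icc.1 hj₀mem
    obtain ⟨V, hVo, hVne, hVU, hVprop⟩ := hcore j₀
    refine ⟨V, hVo, hVne, hVU, ?_⟩
    rw [eq_empty_iff_forall_notMem]
    rintro x ⟨hxV, hx01, hxcond⟩
    obtain ⟨hx01', hlen⟩ := hVprop x hxV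
    have hnN : N ≤ q + j₀ := le_trans hqN (Nat.le_add_right q j₀)
    have hcond := hxcond (q + j₀) hnN
    have hMpos : 0 < Mfun β 1 j₀ := by
      rw [Mfun_one hβ]; exact (iter_mem hβ one_mem j₀).1
    have hlb : Real.logb β (Mfun β 1 j₀) ≤ -(tseq β j₀ : ℝ) := by
      have h1 : Mfun β 1 j₀ ≤ (β^(tseq β j₀))⁻¹ := by
        rw [Mfun_one hβ]; exact iter_one_le hβ j₀
      calc Real.logb β (Mfun β 1 j₀) ≤ Real.logb β ((β^(tseq β j₀))⁻¹) :=
            Real.logb_le_logb_of_le hβ hMpos h1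
        _ = -(tseq β j₀ : ℝ) := by
            rw [Real.logb_inv, Real.logb_pow, Real.logb_self_eq_one hβ, mul_one]
    have hnR : (0:ℝ) < ((q + j₀ : ℕ) : ℝ) := by
      have : (1:ℕ) ≤ q + j₀ := by omega
      exact_mod_cast Nat.lt_of_lt_of_le Nat.zero_lt_one this
    have hval : -Real.logb β (len (In β x (q + j₀)))
        = ((q + j₀ : ℕ) : ℝ) - Real.logb β (Mfun β 1 j₀) := by
      rw [hlen, neg_logb_scaled hβ hMpos]
    have hGamEq : Gam β n₀ = tseq β j₀ := hj₀eq
    have hn₀R : (0:ℝ) < (n₀:ℝ) := by exact_mod_cast h1n₀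
    have htlb : lam β / 2 * n₀ < (tseq β j₀ : ℝ) := by
      have h2 : lam β / 2 < (Gam β n₀ : ℝ)/n₀ := hn₀
      rw [lt_div_iff₀ hn₀R] at h2
      rw [← hGamEq]
      linarith
    have h2n : ((q + j₀ : ℕ) : ℝ) ≤ 2 * (n₀:ℝ) := by
      have : (q + j₀ : ℕ) ≤ 2 * n₀ := by omega
      exact_mod_cast this
    have hfinal : 1 + lam β / 4 < -Real.logb β (len (In β x (q + j₀))) / ((q + j₀ : ℕ) : ℝ) := by
      rw [hval, lt_div_iff₀ hnR]
      nlinarith [hlb, htlb, h2n, hlam, hnR]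
    linarith [hcond, hfinal]
  · refine ⟨U, hUo, hUne, subset_rfl, ?_⟩
    rw [eq_empty_iff_forall_notMem]
    rintro x ⟨hxU, hx01, _⟩
    exact hT (touch hUo hxU hx01)

/-- The ratio sequence is (eventually) bounded above, for every point. -/
lemma r_bdd (hlam : 0 < lam β) {x : ℝ} (hx : x ∈ Ioc (0:ℝ) 1) :
    IsBoundedUnder (· ≤ ·) atTop (fun n : ℕ => -Real.logb β (len (In β x n))/(n:ℝ)) := by
  have hA : ∃ A : ℝ, ∀ᶠ n : ℕ in atTop, (Gam β n : ℝ)/n ≤ A := by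
    by_contra h
    push_neg at h
    have hemp : {a : ℝ | ∀ᶠ n : ℕ in atTop, (Gam β n : ℝ)/n ≤ a} = ∅ := by
      rw [eq_empty_iff_forall_notMem]
      exact fun a ha => h a (Filter.Eventually.mono
        (show ∀ᶠ n : ℕ in atTop, (Gam β n : ℝ)/n ≤ a from ha) fun n hn => not_lt.2 hn)
    have h0 : lam β = 0 := by
      rw [lam, Filter.limsup_eq, hemp, Real.sInf_empty]
    linarith
  obtain ⟨A, hA⟩ := hA
  refine ⟨A + 2, ?_⟩
  rw [Filter.eventually_map]
  filter_upwards [hA, Filter.eventually_ge_atTop 1] with n h1 h2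
  have hnR : (0:ℝ) < (n:ℝ) := by exact_mod_cast h2
  have hval : -Real.logb β (len (In β x n)) = (n:ℝ) - Real.logb β (Mfun β x n) :=
    neg_logb_len hβ hx n
  have hMlb := Mfun_lb hβ hx n
  have hlogb : -(((Gam β n : ℝ)) + 1) ≤ Real.logb β (Mfun β x n) := by
    calc -((Gam β n : ℝ)+1) = Real.logb β ((β^(Gam β n + 1))⁻¹) := by
          rw [Real.logb_inv, Real.logb_pow, Real.logb_self_eq_one hβ, mul_one]
          push_cast; ring
      _ ≤ _ := Real.logb_le_logb_of_le hβ (by positivity) hMlb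
  show -Real.logb β (len (In β x n))/(n:ℝ) ≤ A + 2
  rw [hval, div_le_iff₀ hnR]
  have hΓ : (Gam β n : ℝ) ≤ A * n := by
    rw [div_le_iff₀ hnR] at h1
    exact h1
  have hn1R : (1:ℝ) ≤ (n:ℝ) := by exact_mod_cast h2
  linarith [hlogb, hΓ, hn1R]

end Beta

open Beta

/-- If `λ(β) > 0`, the irregular set
`D = {x ∈ (0,1] : liminf (−log_β |I_n(x)|)/n < limsup (−log_β |I_n(x)|)/n}`
is residual in `[0,1]`: its complement `[0,1] \ D` is of the first category (meagre). -/
theorem irregular_set_residual (β : ℝ) (hβ : 1 < β) (hlam : 0 < lam β) :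
    IsMeagre (Icc (0:ℝ) 1 \ {x ∈ Ioc (0:ℝ) 1 | lowerD β x < upperD β x}) := by
  classical
  set c₁ : ℝ := 1 + lam β / 4 with hc₁
  set FF : ℕ → Set ℝ := fun N => {x : ℝ | x ∈ Ioc (0:ℝ) 1 ∧
    ∀ n : ℕ, N ≤ n → -Real.logb β (len (In β x n))/(n:ℝ) ≠ 1} with hFF
  set GG : ℕ → Set ℝ := fun N => {x : ℝ | x ∈ Ioc (0:ℝ) 1 ∧
    ∀ n : ℕ, N ≤ n → -Real.logb β (len (In β x n))/(n:ℝ) ≤ c₁} with hGG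
  have hsub : Icc (0:ℝ) 1 \ {x ∈ Ioc (0:ℝ) 1 | lowerD β x < upperD β x} ⊆
      {(0:ℝ)} ∪ ((⋃ N, FF N) ∪ (⋃ N, GG N)) := by
    rintro x ⟨hxIcc, hxD⟩
    by_cases hx01 : x ∈ Ioc (0:ℝ) 1
    · right
      by_contra hcon
      have hF : ∀ N : ℕ, ∃ n, N ≤ n ∧ -Real.logb β (len (In β x n))/(n:ℝ) = 1 := by
        intro N
        have hnot : x ∉ FF N := fun h => hcon (Or.inl (mem_iUnion.2 ⟨N, h⟩))
        by_contra hno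
        push_neg at hno
        exact hnot ⟨hx01, fun n hn => hno n hn⟩
      have hG : ∀ N : ℕ, ∃ n, N ≤ n ∧ c₁ < -Real.logb β (len (In β x n))/(n:ℝ) := by
        intro N
        have hnot : x ∉ GG N := fun h => hcon (Or.inr (mem_iUnion.2 ⟨N, h⟩))
        by_contra hno
        push_neg at hno
        exact hnot ⟨hx01, fun n hn => hno n hn⟩
      apply hxD
      refine ⟨hx01, ?_⟩
      have hupper : c₁ ≤ upperD β x := by
        have hfreq : ∃ᶠ n in atTop, c₁ ≤ -Real.logb β (len (In β x n))/(n:ℝ) :=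
          Filter.frequently_atTop.2 (fun N => by
            obtain ⟨n, hn1, hn2⟩ := hG N
            exact ⟨n, hn1, hn2.le⟩)
        exact Filter.le_limsup_of_frequently_le hfreq (r_bdd hβ hlam hx01)
      have hlower : lowerD β x ≤ 1 := by
        have hfreq : ∃ᶠ n in atTop, -Real.logb β (len (In β x n))/(n:ℝ) = 1 :=
          Filter.frequently_atTop.2 (fun N => hF N)
        rw [lowerD, Filter.liminf_eq]
        apply Real.sSup_le _ zero_le_one
        intro a ha
        simp only [mem_setOf_eq] at ha
        obtain ⟨n, h1, h2⟩ := (ha.and_frequently hfreq).exists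
        linarith [h2 ▸ h1]
      have h1c : (1:ℝ) < c₁ := by rw [hc₁]; linarith
      linarith
    · left
      have hx0 : x = 0 := by
        simp only [mem_Ioc, not_and_or, not_lt, not_le] at hx01
        rcases hx01 with h | h
        · linarith [hxIcc.1, h]
        · linarith [hxIcc.2, h]
      simp [hx0]
  apply IsMeagre.mono hsub
  have ndm : ∀ {s : Set ℝ}, IsNowhereDense s → IsMeagre s := by
    intro s hs
    rw [isMeagre_iff_countable_union_isNowhereDense]
    exact ⟨{s}, by simpa using hs, countable_singleton s, by simp⟩
  have m1 : IsMeagre ({(0:ℝ)} : Set ℝ) := by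
    apply ndm
    rw [IsNowhereDense, closure_singleton, interior_singleton]
  have m2 : IsMeagre (⋃ N, FF N) := isMeagre_iUnion (fun N => ndm (F_nd hβ N))
  have m3 : IsMeagre (⋃ N, GG N) := isMeagre_iUnion (fun N => ndm (G_nd hβ hlam N))
  have hu : ∀ {s t : Set ℝ}, IsMeagre s → IsMeagre t → IsMeagre (s ∪ t) := by
    intro s t hs ht
    rw [IsMeagre, Set.compl_union]
    exact Filter.inter_mem hs ht
  exact hu m1 (hu m2 m3)
end
end
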